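/- arXiv:0706.3816 — 3 statements merged into one kernel-verified Lean document; each statement's English description precedes it below -/
import Mathlib

section
/- Let f be holomorphic on the disc D_R = {z : |z| < R}, with Re f > 0 on D_R. Let z = r e^{iθ} and a = r_a e^{iθ} with 0 ≤ r_a ≤ r < R. Then for every n ≥ 1, |f^{(n)}(z)| ≤ (2 n! R (R - r_a)) / ((R - r)^{n+1} (R + r_a)) · Re f(a). -/
open Complex Metric Real

lemma circleMap0_ne_zero {s : ℝ} (hs : s ≠ 0) (t : ℝ) : circleMap 0 s t ≠ 0 := by
  simpa using circleMap_ne_center hs (c := 0) (θ := t)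

lemma conj_circleMap' {s : ℝ} (t : ℝ) :
    (starRingEnd ℂ) (circleMap 0 s t) = s^2 / circleMap 0 s t := by
  rcases eq_or_ne s 0 with rfl | hs
  · simp [circleMap]
  · have h0 : circleMap 0 s t ≠ 0 := circleMap0_ne_zero hs t
    rw [eq_div_iff h0, circleMap_zero]
    rw [map_mul, ← Complex.exp_conj]
    simp only [map_mul, Complex.conj_ofReal, Complex.conj_I, mul_neg]
    rw [mul_mul_mul_comm, ← Complex.exp_add]
    simp [sq]

lemma denom_ne {s : ℝ} {c w : ℂ} (hc : ‖c‖ < s) (hw : ‖w‖ ≤ s) :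
    ((s:ℂ))^2 - c * w ≠ 0 := by
  intro h
  have h' : (s:ℂ)^2 = c * w := by linear_combination h
  have h2 := congrArg norm h'
  simp only [norm_mul, norm_pow, Complex.norm_real, Real.norm_eq_abs] at h2
  have hc0 : (0:ℝ) ≤ ‖c‖ := norm_nonneg c
  have hs : 0 < s := lt_of_le_of_lt (norm_nonneg c) hc
  rw [_root_.abs_of_pos hs] at h2
  nlinarith [norm_nonneg w, mul_le_mul_of_nonneg_left hw hc0,
    mul_lt_mul_of_pos_right hc hs]

lemma norm_circleMap0 {s : ℝ} (hs : 0 ≤ s) (t : ℝ) : ‖circleMap 0 s t‖ = s := by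
  rw [norm_circleMap_zero, _root_.abs_of_nonneg hs]

lemma conj_mobius {s : ℝ} (hs : 0 < s) {a : ℂ} (han : ‖a‖ < s) (t : ℝ) :
    (starRingEnd ℂ) ((circleMap 0 s t + a)/(circleMap 0 s t - a))
      = ((s:ℂ)^2 + (starRingEnd ℂ) a * circleMap 0 s t)
        / ((s:ℂ)^2 - (starRingEnd ℂ) a * circleMap 0 s t) := by
  set w := circleMap 0 s t with hw
  have hw0 : w ≠ 0 := circleMap0_ne_zero hs.ne' t
  have hwn : ‖w‖ = s := norm_circleMap0 hs.le t
  have hd : (s:ℂ)^2 - (starRingEnd ℂ) a * w ≠ 0 :=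
    denom_ne (by rwa [RCLike.norm_conj]) hwn.le
  have hwa : w - a ≠ 0 := by
    intro h
    rw [sub_eq_zero] at h
    rw [h] at hwn
    rw [hwn] at han
    exact lt_irrefl _ han
  have hne : (s:ℂ)^2/w - (starRingEnd ℂ) a ≠ 0 := by
    intro h
    apply hd
    have : ((s:ℂ)^2/w - (starRingEnd ℂ) a) * w = 0 := by rw [h]; ring
    rw [sub_mul, div_mul_cancel₀ _ hw0] at this
    linear_combination this
  rw [map_div₀, map_add, map_sub, conj_circleMap', ← hw]
  rw [div_eq_div_iff hne hd]
  have hdm : (s:ℂ)^2/w * w = (s:ℂ)^2 := div_mul_cancel₀ _ hw0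
  linear_combination (-2*(starRingEnd ℂ) a) * hdm

lemma re_mobius {w a : ℂ} (hwa : w - a ≠ 0) :
    ((w + a)/(w - a)).re = (Complex.normSq w - Complex.normSq a) / Complex.normSq (w - a) := by
  have h0 : Complex.normSq (w - a) ≠ 0 := by
    rw [Ne, Complex.normSq_eq_zero]; exact hwa
  rw [Complex.div_re]
  field_simp [Complex.normSq_apply, Complex.add_re, Complex.sub_re, Complex.add_im,
    Complex.sub_im]
  simp only [Complex.normSq_apply, Complex.add_re, Complex.sub_re, Complex.add_im, Complex.sub_im]
  ring

lemma kernel_bound {s r ra x : ℝ} (h1 : 0 ≤ ra) (h2 : ra ≤ r) (hrs : r < s) (hx : |x| ≤ s) :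
    (s^2 - 2*ra*x + ra^2) * (s - r)^2 ≤ (s - ra)^2 * (s^2 - 2*r*x + r^2) := by
  have hkey : ra * (s-r)^2 ≤ r * (s-ra)^2 := by
    nlinarith [mul_nonneg (by linarith : (0:ℝ) ≤ r - ra) (sq_nonneg (s-ra)),
      mul_nonneg h1 (mul_nonneg (by linarith : (0:ℝ) ≤ r - ra)
        (by linarith : (0:ℝ) ≤ 2*s - ra - r))]
  have hxs : x ≤ s := (abs_le.1 hx).2
  nlinarith [mul_nonneg (by linarith : (0:ℝ) ≤ s - x)
    (by linarith : (0:ℝ) ≤ r*(s-ra)^2 - ra*(s-r)^2)]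

lemma kernel_est {s r ra θ : ℝ} (h1 : 0 ≤ ra) (h2 : ra ≤ r) (hrs : r < s)
    {z a : ℂ} (hz : z = (r:ℂ)*Complex.exp (θ*I)) (ha : a = (ra:ℂ)*Complex.exp (θ*I))
    (n : ℕ) (hn : 1 ≤ n) (t : ℝ) :
    ‖circleMap 0 s t / (circleMap 0 s t - z)^(n+1)‖ ≤
      (s*(s-ra)/((s-r)^(n+1)*(s+ra))) *
        (((circleMap 0 s t + a)/(circleMap 0 s t - a)).re) := by
  have h0r : (0:ℝ) ≤ r := le_trans h1 h2
  have hs0 : 0 < s := lt_of_le_of_lt h0r hrs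
  set u := Complex.exp ((θ:ℂ)*I) with hu_def
  have hu : ‖u‖ = 1 := Complex.norm_exp_ofReal_mul_I θ
  set w := circleMap 0 s t with hw_def
  have hwn : ‖w‖ = s := norm_circleMap0 hs0.le t
  have hzn : ‖z‖ = r := by
    rw [hz, norm_mul, Complex.norm_real, Real.norm_eq_abs, hu, _root_.abs_of_nonneg h0r,
      mul_one]
  have han : ‖a‖ = ra := by
    rw [ha, norm_mul, Complex.norm_real, Real.norm_eq_abs, hu, _root_.abs_of_nonneg h1,
      mul_one]
  have hwz : w - z ≠ 0 := by
    intro h; rw [sub_eq_zero] at h; rw [h, hzn] at hwn; linarith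
  have hwa : w - a ≠ 0 := by
    intro h; rw [sub_eq_zero] at h; rw [h, han] at hwn; linarith
  have nwz : 0 < ‖w - z‖ := norm_pos_iff.2 hwz
  have nwa : 0 < ‖w - a‖ := norm_pos_iff.2 hwa
  set x := (w * (starRingEnd ℂ) u).re with hx_def
  have hx : |x| ≤ s := by
    calc |x| ≤ ‖w * (starRingEnd ℂ) u‖ := Complex.abs_re_le_norm _
    _ = s := by
        rw [norm_mul, RCLike.norm_conj, hu, mul_one, hwn]
  have hcz : w * (starRingEnd ℂ) z = (r:ℂ) * (w * (starRingEnd ℂ) u) := by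
    rw [hz]; rw [map_mul, Complex.conj_ofReal]; ring
  have hca : w * (starRingEnd ℂ) a = (ra:ℂ) * (w * (starRingEnd ℂ) u) := by
    rw [ha]; rw [map_mul, Complex.conj_ofReal]; ring
  have e1 : ‖w - z‖^2 = s^2 - 2*r*x + r^2 := by
    rw [Complex.sq_norm, Complex.normSq_sub, hcz]
    have : Complex.normSq w = s^2 := by rw [← Complex.sq_norm, hwn]
    have hz2 : Complex.normSq z = r^2 := by rw [← Complex.sq_norm, hzn]
    rw [this, hz2]
    simp [Complex.mul_re, Complex.ofReal_re, Complex.ofReal_im, ← hx_def]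
    ring
  have e2 : ‖w - a‖^2 = s^2 - 2*ra*x + ra^2 := by
    rw [Complex.sq_norm, Complex.normSq_sub, hca]
    have : Complex.normSq w = s^2 := by rw [← Complex.sq_norm, hwn]
    have ha2 : Complex.normSq a = ra^2 := by rw [← Complex.sq_norm, han]
    rw [this, ha2]
    simp [Complex.mul_re, Complex.ofReal_re, Complex.ofReal_im, ← hx_def]
    ring
  have sq1 : (‖w-a‖*(s-r))^2 ≤ ((s-ra)*‖w-z‖)^2 := by
    rw [mul_pow, mul_pow, e1, e2]
    exact kernel_bound h1 h2 hrs hx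
  have key1 : ‖w-a‖*(s-r) ≤ (s-ra)*‖w-z‖ := by
    have hA : (0:ℝ) ≤ ‖w-a‖*(s-r) := mul_nonneg nwa.le (by linarith)
    have hB : (0:ℝ) ≤ (s-ra)*‖w-z‖ := mul_nonneg (by linarith) nwz.le
    exact (pow_le_pow_iff_left₀ hA hB two_ne_zero).1 sq1
  have key2 : s - r ≤ ‖w - z‖ := by
    calc s - r = ‖w‖ - ‖z‖ := by rw [hwn, hzn]
    _ ≤ ‖w - z‖ := norm_sub_norm_le w z
  obtain ⟨m, rfl⟩ : ∃ m, n = m + 1 := ⟨n-1, (Nat.succ_pred_eq_of_pos hn).symm⟩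
  have main : ‖w-a‖^2*(s-r)^(m+1+1) ≤ (s-ra)^2*‖w-z‖^(m+1+1) := by
    have c1 : ‖w-a‖^2*(s-r)^(m+1+1) = (‖w-a‖*(s-r))^2*(s-r)^m := by ring
    have c2 : (s-ra)^2*‖w-z‖^(m+1+1) = ((s-ra)*‖w-z‖)^2*‖w-z‖^m := by ring
    rw [c1, c2]
    exact mul_le_mul sq1 (pow_le_pow_left₀ (by linarith) key2 m) (pow_nonneg (by linarith) m)
      (by positivity)
  have hre : ((w + a)/(w - a)).re = (s^2 - ra^2)/‖w-a‖^2 := by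
    rw [re_mobius hwa]
    have n1 : Complex.normSq w = s^2 := by rw [← Complex.sq_norm, hwn]
    have n2 : Complex.normSq a = ra^2 := by rw [← Complex.sq_norm, han]
    have n3 : Complex.normSq (w - a) = ‖w-a‖^2 := by
      rw [← Complex.sq_norm]
    rw [n1, n2, n3]
  have hlhs : ‖w / (w - z)^(m+1+1)‖ = s/‖w-z‖^(m+1+1) := by
    rw [norm_div, norm_pow, hwn]
  rw [hlhs, hre]
  rw [div_mul_div_comm]
  rw [div_le_div_iff₀ (pow_pos nwz _) (mul_pos (mul_pos (pow_pos (show (0:ℝ) < s - r by linarith) _) (by linarith : (0:ℝ) < s + ra)) (pow_pos nwa 2))]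
  nlinarith [mul_le_mul_of_nonneg_left main
    (mul_nonneg hs0.le (by linarith : (0:ℝ) ≤ s + ra)), sq_nonneg (s-ra),
    pow_pos nwz (m+1+1), pow_pos (show (0:ℝ) < s - r by linarith) (m+1+1)]



lemma intervalIntegral_conj {g : ℝ → ℂ} {x y : ℝ} :
    (∫ t in x..y, (starRingEnd ℂ) (g t)) = (starRingEnd ℂ) (∫ t in x..y, g t) := by
  simp [intervalIntegral, integral_conj, map_sub]

lemma dt_to_circle {s : ℝ} (hs : 0 < s) (G : ℂ → ℂ) :
    (∫ t in (0:ℝ)..(2*π), G (circleMap 0 s t)) = ∮ w in C(0, s), (w * I)⁻¹ * G w := by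
  rw [circleIntegral]
  refine (intervalIntegral.integral_congr fun t _ => ?_).symm
  have h0 : circleMap 0 s t ≠ 0 := circleMap0_ne_zero hs.ne' t
  simp only [deriv_circleMap, smul_eq_mul]
  field_simp

lemma sphere_subset_ball' {s R : ℝ} (hs : 0 ≤ s) (hsR : s < R) :
    sphere (0:ℂ) s ⊆ ball (0:ℂ) R := by
  intro w hw
  simp only [mem_sphere_iff_norm, sub_zero] at hw
  simp [mem_ball_iff_norm, hw, hsR]

lemma cauchy_pow {R s : ℝ} (hs : 0 < s) (hsR : s < R) {z : ℂ} (hz : z ∈ ball (0:ℂ) s) :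
    ∀ n : ℕ, ∀ f : ℂ → ℂ, DifferentiableOn ℂ f (ball 0 R) →
    (∮ w in C(0, s), ((w - z) ^ (n+1))⁻¹ * f w)
      = (2 * π * I / n.factorial) * iteratedDeriv n f z := by
  have hzR : z ∈ ball (0:ℂ) R := ball_subset_ball hsR.le hz
  have hwz : ∀ w ∈ sphere (0:ℂ) s, w - z ≠ 0 := by
    intro w hw
    simp only [mem_sphere_iff_norm, sub_zero] at hw
    simp only [mem_ball_iff_norm, sub_zero] at hz
    intro h
    rw [sub_eq_zero] at h
    rw [h] at hw
    linarith
  intro n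
  induction n with
  | zero =>
    intro f hf
    have := (hf.mono (closedBall_subset_ball hsR)).circleIntegral_sub_inv_smul hz
    simpa [iteratedDeriv_zero, smul_eq_mul, pow_one, div_mul_eq_mul_div, mul_comm] using this
  | succ n ih =>
    intro f hf
    have hAn : AnalyticOnNhd ℂ f (ball 0 R) := hf.analyticOnNhd isOpen_ball
    have hg : DifferentiableOn ℂ (deriv f) (ball 0 R) := hAn.deriv.differentiableOn
    have hfc : ContinuousOn f (sphere 0 s) :=
      hf.continuousOn.mono (sphere_subset_ball' hs.le hsR)
    have hgc : ContinuousOn (deriv f) (sphere 0 s) :=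
      hg.continuousOn.mono (sphere_subset_ball' hs.le hsR)
    have hker : ∀ m : ℕ, ContinuousOn (fun w => ((w - z) ^ m)⁻¹) (sphere (0:ℂ) s) := by
      intro m
      exact (((continuousOn_id.sub continuousOn_const).pow m).inv₀
        fun w hw => pow_ne_zero _ (hwz w hw))
    have hint2 : CircleIntegrable (fun w => ((w - z) ^ (n+1))⁻¹ * deriv f w) 0 s :=
      ((hker (n+1)).mul hgc).circleIntegrable hs.le
    have hint1 : CircleIntegrable (fun w => ((n:ℂ)+1) • (((w - z) ^ (n+2))⁻¹ * f w)) 0 s :=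
      (continuousOn_const.mul ((hker (n+2)).mul hfc)).circleIntegrable hs.le
    have hFd : ∀ w ∈ sphere (0:ℂ) s,
        HasDerivAt (fun w => ((w - z) ^ (n+1))⁻¹ * f w)
          (((w - z) ^ (n+1))⁻¹ * deriv f w - ((n:ℂ)+1) • (((w - z) ^ (n+2))⁻¹ * f w)) w := by
      intro w hw
      have hwz' := hwz w hw
      have hfd : HasDerivAt f (deriv f w) w :=
        (hf.differentiableAt (isOpen_ball.mem_nhds (sphere_subset_ball' hs.le hsR hw))).hasDerivAt
      have h1 : HasDerivAt (fun w => (w - z) ^ (n+1)) (((n:ℂ)+1) * (w - z) ^ n) w := by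
        simpa [Function.comp_def] using ((hasDerivAt_pow (n+1) (w - z)).comp w ((hasDerivAt_id w).sub_const z))
      have h2 := (h1.inv (pow_ne_zero _ hwz')).mul hfd
      refine h2.congr_deriv ?_
      have hne : ((w - z) ^ (n+1))^2 ≠ 0 := pow_ne_zero _ (pow_ne_zero _ hwz')
      simp only [smul_eq_mul, Pi.inv_apply]
      field_simp
      ring
    have h0 : (∮ w in C(0, s),
        (((w - z) ^ (n+1))⁻¹ * deriv f w - ((n:ℂ)+1) • (((w - z) ^ (n+2))⁻¹ * f w))) = 0 :=
      circleIntegral.integral_eq_zero_of_hasDerivWithinAt hs.le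
        fun w hw => (hFd w hw).hasDerivWithinAt
    rw [circleIntegral.integral_sub hint2 hint1, sub_eq_zero,
      circleIntegral.integral_smul, ih (deriv f) hg, ← iteratedDeriv_succ'] at h0
    have hn1 : ((n:ℂ)+1) ≠ 0 := by
      have : (0:ℝ) < (n:ℝ) + 1 := by positivity
      intro h
      have := congrArg Complex.re h
      simp at this
      linarith
    have hnf : ((n.factorial : ℂ)) ≠ 0 := Nat.cast_ne_zero.2 n.factorial_ne_zero
    have hfac : (((n+1).factorial : ℂ)) = ((n:ℂ)+1) * n.factorial := by
      push_cast [Nat.factorial_succ]; ring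
    have := h0.symm
    rw [smul_eq_mul] at this
    rw [show n + 1 + 1 = n + 2 from rfl] at *
    have heq : (∮ w in C(0, s), ((w - z) ^ (n+2))⁻¹ * f w)
        = (2 * ↑π * I / ((n:ℂ)+1) / n.factorial) * iteratedDeriv (n+1) f z := by
      field_simp at this ⊢
      linear_combination this
    rw [heq, hfac]
    field_simp
section Identities

open Complex Metric Real intervalIntegral

variable {R s : ℝ} {f : ℂ → ℂ}

lemma f_cont_sphere (hs0 : 0 < s) (hsR : s < R) (hf : DifferentiableOn ℂ f (ball 0 R)) :
    Continuous fun t => f (circleMap 0 s t) := by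
  apply hf.continuousOn.comp_continuous (continuous_circleMap 0 s)
  intro t
  rw [mem_ball_zero_iff, norm_circleMap0 hs0.le]
  exact hsR

lemma partI_f (hs0 : 0 < s) (hsR : s < R) (hf : DifferentiableOn ℂ f (ball 0 R))
    {z : ℂ} (hzn : ‖z‖ < s) (n : ℕ) :
    (∫ t in (0:ℝ)..2*π,
        f (circleMap 0 s t) * (circleMap 0 s t / (circleMap 0 s t - z)^(n+1)))
      = (2*(π:ℂ)/(n.factorial:ℂ)) * iteratedDeriv n f z := by
  have hzb : z ∈ ball (0:ℂ) s := mem_ball_zero_iff.2 hzn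
  rw [dt_to_circle hs0 (fun w => f w * (w / (w - z)^(n+1)))]
  rw [circleIntegral.integral_congr hs0.le
    (g := fun w => I⁻¹ • (((w - z)^(n+1))⁻¹ * f w)) ?_]
  · rw [circleIntegral.integral_smul, cauchy_pow hs0 hsR hzb n f hf, smul_eq_mul]
    have hfac : ((n.factorial : ℂ)) ≠ 0 := Nat.cast_ne_zero.2 n.factorial_ne_zero
    field_simp [Complex.I_ne_zero]
    try ring
  · intro w hw
    have hw0 : w ≠ 0 := by
      intro h; rw [h] at hw; simp only [mem_sphere_iff_norm, sub_zero, norm_zero] at hw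
      exact hs0.ne hw
    have hwz : w - z ≠ 0 := by
      intro h; rw [sub_eq_zero] at h
      rw [mem_sphere_iff_norm, sub_zero] at hw
      rw [← h] at hzn; rw [hw] at hzn; exact lt_irrefl _ hzn
    simp only [smul_eq_mul]
    field_simp
    try ring

lemma partI_conj (hs0 : 0 < s) (hsR : s < R) (hf : DifferentiableOn ℂ f (ball 0 R))
    {z : ℂ} (hzn : ‖z‖ < s) {n : ℕ} (hn : 1 ≤ n) :
    (∫ t in (0:ℝ)..2*π, (starRingEnd ℂ) (f (circleMap 0 s t))
        * (circleMap 0 s t / (circleMap 0 s t - z)^(n+1))) = 0 := by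
  obtain ⟨m, rfl⟩ : ∃ m, n = m + 1 := ⟨n-1, (Nat.succ_pred_eq_of_pos hn).symm⟩
  set c := (starRingEnd ℂ) z with hc
  have hcn : ‖c‖ < s := by rwa [RCLike.norm_conj]
  have e0 : ∀ t : ℝ, (starRingEnd ℂ)
        (circleMap 0 s t / (circleMap 0 s t - z)^(m+1+1))
      = ((s:ℂ)^2 / circleMap 0 s t)
          / ((s:ℂ)^2 / circleMap 0 s t - c)^(m+1+1) := by
    intro t
    rw [map_div₀, map_pow, map_sub, conj_circleMap', ← hc]
  have e1 : ∀ t : ℝ, (starRingEnd ℂ) (f (circleMap 0 s t))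
      * (circleMap 0 s t / (circleMap 0 s t - z)^(m+1+1))
      = (starRingEnd ℂ) (f (circleMap 0 s t) *
          (((s:ℂ)^2 / circleMap 0 s t)
            / ((s:ℂ)^2 / circleMap 0 s t - c)^(m+1+1))) := by
    intro t
    rw [map_mul, ← e0 t, Complex.conj_conj]
  rw [intervalIntegral.integral_congr (fun t _ => e1 t), _root_.intervalIntegral_conj]
  have e2 : (∫ t in (0:ℝ)..2*π, f (circleMap 0 s t) *
      (((s:ℂ)^2 / circleMap 0 s t)
        / ((s:ℂ)^2 / circleMap 0 s t - c)^(m+1+1))) = 0 := by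
    rw [dt_to_circle hs0 (fun w => f w * (((s:ℂ)^2 / w)
        / ((s:ℂ)^2 / w - c)^(m+1+1)))]
    rw [circleIntegral.integral_congr hs0.le
      (g := fun w => I⁻¹ • (((s:ℂ)^2 * w^m * (((s:ℂ)^2 - c*w)^(m+1+1))⁻¹) * f w)) ?_]
    · rw [circleIntegral.integral_smul]
      have hz0 : (∮ w in C(0, s),
          ((s:ℂ)^2 * w^m * (((s:ℂ)^2 - c*w)^(m+1+1))⁻¹) * f w) = 0 := by
        apply circleIntegral_eq_zero_of_differentiable_on_off_countable hs0.le Set.countable_empty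
        · apply ContinuousOn.mul
          · apply ContinuousOn.mul (continuousOn_const.mul (continuousOn_pow m))
            apply ContinuousOn.inv₀
            · exact (continuousOn_const.sub (continuousOn_const.mul continuousOn_id)).pow _
            · intro w hw
              exact pow_ne_zero _ (denom_ne hcn (mem_closedBall_zero_iff.1 hw))
          · exact hf.continuousOn.mono
              ((closedBall_subset_ball hsR))
        · intro x hx
          have hxb : x ∈ ball (0:ℂ) R := ball_subset_ball hsR.le hx.1
          have hxc : ‖x‖ ≤ s := le_of_lt (mem_ball_zero_iff.1 hx.1)
          apply DifferentiableAt.mul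
          · apply DifferentiableAt.mul ((differentiableAt_const _).mul (differentiableAt_pow m))
            apply DifferentiableAt.inv
            · exact ((differentiableAt_const _).sub
                ((differentiableAt_const _).mul differentiableAt_id)).pow _
            · exact pow_ne_zero _ (denom_ne hcn hxc)
          · exact hf.differentiableAt (isOpen_ball.mem_nhds hxb)
      rw [hz0, smul_zero]
    · intro w hw
      have hwn : ‖w‖ = s := by rwa [mem_sphere_iff_norm, sub_zero] at hw
      have hw0 : w ≠ 0 := by
        intro h; rw [h, norm_zero] at hwn; exact hs0.ne hwn
      have hd : (s:ℂ)^2 - c*w ≠ 0 := denom_ne hcn hwn.le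
      have hsplit : (s:ℂ)^2 / w - c = ((s:ℂ)^2 - c*w)/w := by
        field_simp
        try ring
      simp only [smul_eq_mul]
      rw [hsplit, div_pow]
      field_simp
      ring_nf
      try ring
  rw [e2, map_zero]

end Identities
section Poisson

open Complex Metric Real intervalIntegral

variable {R s : ℝ} {f : ℂ → ℂ}

lemma sub_ne_on_sphere {s : ℝ} {a w : ℂ} (han : ‖a‖ < s) (hw : w ∈ sphere (0:ℂ) s) :
    w - a ≠ 0 := by
  rw [mem_sphere_iff_norm, sub_zero] at hw
  intro h; rw [sub_eq_zero] at h; rw [← h, hw] at han; exact lt_irrefl _ han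

lemma partA1 (hs0 : 0 < s) (hsR : s < R) (hf : DifferentiableOn ℂ f (ball 0 R))
    {a : ℂ} (han : ‖a‖ < s) :
    (∫ t in (0:ℝ)..2*π,
        f (circleMap 0 s t) * ((circleMap 0 s t + a)/(circleMap 0 s t - a)))
      = 2*(π:ℂ)*(2 * f a - f 0) := by
  have hab : a ∈ ball (0:ℂ) s := mem_ball_zero_iff.2 han
  have h0b : (0:ℂ) ∈ ball (0:ℂ) s := mem_ball_self hs0
  have hfd : DifferentiableOn ℂ f (closedBall 0 s) := hf.mono (closedBall_subset_ball hsR)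
  rw [dt_to_circle hs0 (fun w => f w * ((w + a)/(w - a)))]
  rw [circleIntegral.integral_congr hs0.le
    (g := fun w => I⁻¹ • ((2:ℂ) • ((w - a)⁻¹ • f w) - (w - (0:ℂ))⁻¹ • f w)) ?_]
  · have hia : CircleIntegrable (fun w => (2:ℂ) • ((w - a)⁻¹ • f w)) 0 s := by
      apply ContinuousOn.circleIntegrable hs0.le
      refine ContinuousOn.const_smul (g := fun w => (w - a)⁻¹ • f w) ?_ (2:ℂ)
      refine ContinuousOn.smul (f := fun w => (w - a)⁻¹) (g := f) ?_ ?_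
      · exact ((continuousOn_id.sub continuousOn_const).inv₀
          fun w hw => sub_ne_on_sphere han hw)
      · exact hf.continuousOn.mono ((sphere_subset_ball' hs0.le hsR))
    have hi0 : CircleIntegrable (fun w => (w - (0:ℂ))⁻¹ • f w) 0 s := by
      apply ContinuousOn.circleIntegrable hs0.le
      refine ContinuousOn.smul (f := fun w => (w - (0:ℂ))⁻¹) (g := f) ?_ ?_
      · exact ((continuousOn_id.sub continuousOn_const).inv₀
          fun w hw => sub_ne_on_sphere (by simpa using hs0) hw)
      · exact hf.continuousOn.mono ((sphere_subset_ball' hs0.le hsR))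
    rw [circleIntegral.integral_smul, circleIntegral.integral_sub hia hi0,
      circleIntegral.integral_smul, hfd.circleIntegral_sub_inv_smul hab,
      hfd.circleIntegral_sub_inv_smul h0b]
    simp only [smul_eq_mul]
    field_simp [Complex.I_ne_zero]
    try ring
  · intro w hw
    have hw0 : w ≠ 0 := by
      have := sub_ne_on_sphere (by simpa using hs0 : ‖(0:ℂ)‖ < s) hw
      simpa using this
    have hwa : w - a ≠ 0 := sub_ne_on_sphere han hw
    simp only [smul_eq_mul, sub_zero]
    field_simp
    ring_nf
    try ring

lemma partA2 (hs0 : 0 < s) (hsR : s < R) (hf : DifferentiableOn ℂ f (ball 0 R))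
    {a : ℂ} (han : ‖a‖ < s) :
    (∫ t in (0:ℝ)..2*π, f (circleMap 0 s t) *
        (((s:ℂ)^2 + (starRingEnd ℂ) a * circleMap 0 s t)
          / ((s:ℂ)^2 - (starRingEnd ℂ) a * circleMap 0 s t)))
      = 2*(π:ℂ)* f 0 := by
  set c := (starRingEnd ℂ) a with hc
  have hcn : ‖c‖ < s := by rwa [RCLike.norm_conj]
  have h0b : (0:ℂ) ∈ ball (0:ℂ) s := mem_ball_self hs0
  rw [dt_to_circle hs0 (fun w => f w * (((s:ℂ)^2 + c*w)/((s:ℂ)^2 - c*w)))]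
  rw [circleIntegral.integral_congr hs0.le
    (g := fun w => I⁻¹ • ((w - (0:ℂ))⁻¹ • (f w * (((s:ℂ)^2 + c*w)/((s:ℂ)^2 - c*w))))) ?_]
  · rw [circleIntegral.integral_smul]
    have hcic := circleIntegral_sub_inv_smul_of_differentiable_on_off_countable
      (s := (∅ : Set ℂ)) Set.countable_empty h0b
      (f := fun w => f w * (((s:ℂ)^2 + c*w)/((s:ℂ)^2 - c*w))) ?_ ?_
    · rw [hcic]
      have hs2 : ((s:ℂ))^2 ≠ 0 := by
        simpa using denom_ne hcn (by simp [hs0.le] : ‖(0:ℂ)‖ ≤ s)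
      simp only [smul_eq_mul, mul_zero, add_zero, sub_zero]
      rw [div_self hs2, mul_one]
      field_simp [Complex.I_ne_zero]
      try ring
    · apply ContinuousOn.mul (hf.continuousOn.mono (closedBall_subset_ball hsR))
      apply ContinuousOn.div
      · exact continuousOn_const.add (continuousOn_const.mul continuousOn_id)
      · exact continuousOn_const.sub (continuousOn_const.mul continuousOn_id)
      · intro w hw
        exact denom_ne hcn (mem_closedBall_zero_iff.1 hw)
    · intro x hx
      have hxb : x ∈ ball (0:ℂ) R := ball_subset_ball hsR.le hx.1
      apply DifferentiableAt.mul (hf.differentiableAt (isOpen_ball.mem_nhds hxb))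
      apply DifferentiableAt.div
      · exact (differentiableAt_const _).add ((differentiableAt_const _).mul differentiableAt_id)
      · exact (differentiableAt_const _).sub ((differentiableAt_const _).mul differentiableAt_id)
      · exact denom_ne hcn (le_of_lt (mem_ball_zero_iff.1 hx.1))
  · intro w hw
    have hw0 : w ≠ 0 := by
      have hwn : ‖w‖ = s := by rwa [mem_sphere_iff_norm, sub_zero] at hw
      intro h; rw [h, norm_zero] at hwn; exact hs0.ne hwn
    simp only [smul_eq_mul, sub_zero]
    rw [mul_inv]
    ring

end Poisson
section Combine

open Complex Metric Real intervalIntegral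

variable {R s : ℝ} {f : ℂ → ℂ}

lemma poisson (hs0 : 0 < s) (hsR : s < R) (hf : DifferentiableOn ℂ f (ball 0 R))
    {a : ℂ} (han : ‖a‖ < s) :
    (∫ t in (0:ℝ)..2*π, (f (circleMap 0 s t)).re *
        ((circleMap 0 s t + a)/(circleMap 0 s t - a)).re) = 2*π*(f a).re := by
  set c := (starRingEnd ℂ) a with hc
  have hcn : ‖c‖ < s := by rwa [RCLike.norm_conj]
  set g : ℝ → ℂ := fun t => f (circleMap 0 s t) with hg
  set k : ℝ → ℂ := fun t => (circleMap 0 s t + a)/(circleMap 0 s t - a) with hk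
  set q : ℝ → ℂ := fun t =>
    ((s:ℂ)^2 + c * circleMap 0 s t)/((s:ℂ)^2 - c * circleMap 0 s t) with hq
  have hkq : ∀ t, (starRingEnd ℂ) (k t) = q t := fun t => conj_mobius hs0 han t
  have hgc : Continuous g := f_cont_sphere hs0 hsR hf
  have hkc : Continuous k := by
    apply Continuous.div ((continuous_circleMap 0 s).add continuous_const)
      ((continuous_circleMap 0 s).sub continuous_const)
    exact fun t => sub_ne_on_sphere han (circleMap_mem_sphere 0 hs0.le t)
  have hqc : Continuous q := by
    apply Continuous.div (continuous_const.add (continuous_const.mul (continuous_circleMap 0 s)))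
      (continuous_const.sub (continuous_const.mul (continuous_circleMap 0 s)))
    exact fun t => denom_ne hcn (norm_circleMap0 hs0.le t).le
  have halg : ∀ (p x : ℂ), ((4*p.re*x.re : ℝ) : ℂ)
      = p * x + p * (starRingEnd ℂ) x + (starRingEnd ℂ) (p * (starRingEnd ℂ) x)
        + (starRingEnd ℂ) (p * x) := by
    intro p x
    apply Complex.ext <;>
      simp [Complex.mul_re, Complex.mul_im, Complex.add_re, Complex.add_im,
        Complex.ofReal_re, Complex.ofReal_im] <;> ring
  have hJ : (∫ t in (0:ℝ)..2*π, ((4*(g t).re*((k t).re) : ℝ) : ℂ))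
      = 2*(π:ℂ)*(2 * f a - f 0) + 2*(π:ℂ)* f 0
        + (starRingEnd ℂ) (2*(π:ℂ)* f 0) + (starRingEnd ℂ) (2*(π:ℂ)*(2 * f a - f 0)) := by
    have e : ∀ t : ℝ, ((4*(g t).re*((k t).re) : ℝ) : ℂ)
        = g t * k t + g t * q t + (starRingEnd ℂ) (g t * q t)
          + (starRingEnd ℂ) (g t * k t) := by
      intro t
      rw [← hkq t]
      exact halg (g t) (k t)
    rw [intervalIntegral.integral_congr (fun t _ => e t)]
    have i1 : IntervalIntegrable (fun t => g t * k t) MeasureTheory.volume 0 (2*π) :=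
      (hgc.mul hkc).intervalIntegrable _ _
    have i2 : IntervalIntegrable (fun t => g t * q t) MeasureTheory.volume 0 (2*π) :=
      (hgc.mul hqc).intervalIntegrable _ _
    have i3 : IntervalIntegrable (fun t => (starRingEnd ℂ) (g t * q t))
        MeasureTheory.volume 0 (2*π) := (continuous_conj.comp (hgc.mul hqc)).intervalIntegrable _ _
    have i4 : IntervalIntegrable (fun t => (starRingEnd ℂ) (g t * k t))
        MeasureTheory.volume 0 (2*π) := (continuous_conj.comp (hgc.mul hkc)).intervalIntegrable _ _
    rw [intervalIntegral.integral_add ((i1.add i2).add i3) i4,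
      intervalIntegral.integral_add (i1.add i2) i3,
      intervalIntegral.integral_add i1 i2]
    rw [_root_.intervalIntegral_conj, _root_.intervalIntegral_conj]
    rw [partA1 hs0 hsR hf han, partA2 hs0 hsR hf han]
  have hS : (2*(π:ℂ)*(2 * f a - f 0) + 2*(π:ℂ)* f 0
        + (starRingEnd ℂ) (2*(π:ℂ)* f 0) + (starRingEnd ℂ) (2*(π:ℂ)*(2 * f a - f 0)))
      = ((8*π*(f a).re : ℝ) : ℂ) := by
    apply Complex.ext <;>
      simp [Complex.mul_re, Complex.mul_im, Complex.add_re, Complex.add_im,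
        Complex.sub_re, Complex.sub_im, Complex.ofReal_re, Complex.ofReal_im] <;> ring
  rw [hS] at hJ
  rw [intervalIntegral.integral_ofReal] at hJ
  have hre : (∫ t in (0:ℝ)..2*π, 4*(g t).re*((k t).re)) = 8*π*(f a).re :=
    Complex.ofReal_inj.1 hJ
  have e4 : ∀ t : ℝ, 4*(g t).re*((k t).re) = 4*((g t).re*((k t).re)) := fun t => by ring
  rw [intervalIntegral.integral_congr (fun t _ => e4 t),
    intervalIntegral.integral_const_mul] at hre
  linarith

lemma identityI (hs0 : 0 < s) (hsR : s < R) (hf : DifferentiableOn ℂ f (ball 0 R))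
    {z : ℂ} (hzn : ‖z‖ < s) {n : ℕ} (hn : 1 ≤ n) :
    (∫ t in (0:ℝ)..2*π, (((2*(f (circleMap 0 s t)).re : ℝ)) : ℂ) *
        (circleMap 0 s t / (circleMap 0 s t - z)^(n+1)))
      = (2*(π:ℂ)/(n.factorial:ℂ)) * iteratedDeriv n f z := by
  have hgc : Continuous (fun t => f (circleMap 0 s t)) := f_cont_sphere hs0 hsR hf
  have hKc : Continuous (fun t => circleMap 0 s t / (circleMap 0 s t - z)^(n+1)) := by
    apply Continuous.div (continuous_circleMap 0 s)
      (((continuous_circleMap 0 s).sub continuous_const).pow _)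
    exact fun t => pow_ne_zero _ (sub_ne_on_sphere hzn (circleMap_mem_sphere 0 hs0.le t))
  have e : ∀ t : ℝ, (((2*(f (circleMap 0 s t)).re : ℝ)) : ℂ) *
      (circleMap 0 s t / (circleMap 0 s t - z)^(n+1))
      = f (circleMap 0 s t) * (circleMap 0 s t / (circleMap 0 s t - z)^(n+1))
        + (starRingEnd ℂ) (f (circleMap 0 s t)) *
            (circleMap 0 s t / (circleMap 0 s t - z)^(n+1)) := by
    intro t
    rw [← add_mul, Complex.add_conj]
  have i1 : IntervalIntegrable (fun t => f (circleMap 0 s t) *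
      (circleMap 0 s t / (circleMap 0 s t - z)^(n+1))) MeasureTheory.volume 0 (2*π) :=
    (hgc.mul hKc).intervalIntegrable _ _
  have i2 : IntervalIntegrable (fun t => (starRingEnd ℂ) (f (circleMap 0 s t)) *
      (circleMap 0 s t / (circleMap 0 s t - z)^(n+1))) MeasureTheory.volume 0 (2*π) :=
    ((continuous_conj.comp hgc).mul hKc).intervalIntegrable _ _
  rw [intervalIntegral.integral_congr (fun t _ => e t),
    intervalIntegral.integral_add i1 i2,
    partI_f hs0 hsR hf hzn n, partI_conj hs0 hsR hf hzn hn, add_zero]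

end Combine
section Final

open Complex Metric Real intervalIntegral

lemma bound_s (R r ra θ : ℝ) (f : ℂ → ℂ) (h1 : 0 ≤ ra) (h2 : ra ≤ r)
    (hf : DifferentiableOn ℂ f (ball 0 R))
    (hpos : ∀ w ∈ ball (0:ℂ) R, 0 < (f w).re)
    (z a : ℂ) (hz : z = (r:ℂ) * Complex.exp (θ * I)) (ha : a = (ra:ℂ) * Complex.exp (θ * I))
    (n : ℕ) (hn : 1 ≤ n) {s : ℝ} (hrs : r < s) (hsR : s < R) :
    ‖iteratedDeriv n f z‖ ≤
      2 * n.factorial * s * (s - ra) / ((s - r) ^ (n + 1) * (s + ra)) * (f a).re := by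
  have h0r : (0:ℝ) ≤ r := le_trans h1 h2
  have hs0 : 0 < s := lt_of_le_of_lt h0r hrs
  have hu : ‖Complex.exp ((θ:ℂ)*I)‖ = 1 := Complex.norm_exp_ofReal_mul_I θ
  have hzn : ‖z‖ = r := by
    rw [hz, norm_mul, Complex.norm_real, Real.norm_eq_abs, hu, _root_.abs_of_nonneg h0r,
      mul_one]
  have han : ‖a‖ = ra := by
    rw [ha, norm_mul, Complex.norm_real, Real.norm_eq_abs, hu, _root_.abs_of_nonneg h1,
      mul_one]
  have hzs : ‖z‖ < s := by rw [hzn]; exact hrs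
  have has : ‖a‖ < s := by rw [han]; linarith
  have haR : a ∈ ball (0:ℂ) R := mem_ball_zero_iff.2 (by rw [han]; linarith)
  have hfa : 0 < (f a).re := hpos a haR
  set M : ℝ := s*(s-ra)/((s-r)^(n+1)*(s+ra)) with hM
  have hDpos : 0 < (s-r)^(n+1)*(s+ra) :=
    mul_pos (pow_pos (by linarith) _) (by linarith)
  have hM0 : 0 ≤ M := le_of_lt (div_pos (by nlinarith) hDpos)
  have hI := identityI hs0 hsR hf hzs hn
  have hP := poisson hs0 hsR hf has
  have hgc : Continuous (fun t => f (circleMap 0 s t)) := f_cont_sphere hs0 hsR hf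
  have hkc : Continuous (fun t => (circleMap 0 s t + a)/(circleMap 0 s t - a)) := by
    apply Continuous.div ((continuous_circleMap 0 s).add continuous_const)
      ((continuous_circleMap 0 s).sub continuous_const)
    exact fun t => sub_ne_on_sphere has (circleMap_mem_sphere 0 hs0.le t)
  have hbd : ∀ t : ℝ, ‖(((2*(f (circleMap 0 s t)).re : ℝ)) : ℂ) *
      (circleMap 0 s t / (circleMap 0 s t - z)^(n+1))‖
      ≤ 2*M*((f (circleMap 0 s t)).re *
          ((circleMap 0 s t + a)/(circleMap 0 s t - a)).re) := by
    intro t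
    have hrepos : 0 ≤ (f (circleMap 0 s t)).re :=
      (hpos _ (mem_ball_zero_iff.2 (by rw [norm_circleMap0 hs0.le]; exact hsR))).le
    rw [norm_mul]
    have e1 : ‖(((2*(f (circleMap 0 s t)).re : ℝ)) : ℂ)‖ = 2*(f (circleMap 0 s t)).re := by
      rw [Complex.norm_real, Real.norm_eq_abs, _root_.abs_of_nonneg (by linarith)]
    rw [e1]
    have hker := kernel_est h1 h2 hrs hz ha n hn t
    calc 2*(f (circleMap 0 s t)).re * ‖circleMap 0 s t / (circleMap 0 s t - z)^(n+1)‖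
        ≤ 2*(f (circleMap 0 s t)).re *
          (M * ((circleMap 0 s t + a)/(circleMap 0 s t - a)).re) :=
          mul_le_mul_of_nonneg_left hker (by linarith)
      _ = 2*M*((f (circleMap 0 s t)).re *
          ((circleMap 0 s t + a)/(circleMap 0 s t - a)).re) := by ring
  have hGint : IntervalIntegrable (fun t => 2*M*((f (circleMap 0 s t)).re *
      ((circleMap 0 s t + a)/(circleMap 0 s t - a)).re)) MeasureTheory.volume 0 (2*π) := by
    apply Continuous.intervalIntegrable
    exact continuous_const.mul ((Complex.continuous_re.comp hgc).mul
      (Complex.continuous_re.comp hkc))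
  have hnorm := intervalIntegral.norm_integral_le_of_norm_le
    (f := fun t => (((2*(f (circleMap 0 s t)).re : ℝ)) : ℂ) *
      (circleMap 0 s t / (circleMap 0 s t - z)^(n+1)))
    (by positivity : (0:ℝ) ≤ 2*π) (MeasureTheory.ae_of_all _ (fun t _ => hbd t)) hGint
  rw [hI] at hnorm
  have hGval : (∫ t in (0:ℝ)..2*π, 2*M*((f (circleMap 0 s t)).re *
      ((circleMap 0 s t + a)/(circleMap 0 s t - a)).re)) = 2*M*(2*π*(f a).re) := by
    rw [intervalIntegral.integral_const_mul, hP]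
  rw [hGval] at hnorm
  have hlhs : ‖(2*(π:ℂ)/(n.factorial:ℂ)) * iteratedDeriv n f z‖
      = (2*π/(n.factorial:ℝ)) * ‖iteratedDeriv n f z‖ := by
    rw [norm_mul]
    congr 1
    have : (2*(π:ℂ)/(n.factorial:ℂ)) = (((2*π/(n.factorial:ℝ)) : ℝ) : ℂ) := by push_cast; ring
    rw [this, Complex.norm_real, Real.norm_eq_abs, _root_.abs_of_nonneg (by positivity)]
  rw [hlhs] at hnorm
  have hπ : (0:ℝ) < π := Real.pi_pos
  have hfn : (0:ℝ) < (n.factorial : ℝ) := by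
    exact_mod_cast Nat.cast_pos.2 n.factorial_pos
  calc ‖iteratedDeriv n f z‖
      = ((n.factorial:ℝ)/(2*π)) * ((2*π/(n.factorial:ℝ)) * ‖iteratedDeriv n f z‖) := by
        field_simp
    _ ≤ ((n.factorial:ℝ)/(2*π)) * (2*M*(2*π*(f a).re)) :=
        mul_le_mul_of_nonneg_left hnorm (by positivity)
    _ = 2 * n.factorial * s * (s - ra) / ((s - r) ^ (n + 1) * (s + ra)) * (f a).re := by
        rw [hM]
        field_simp

end Final

open Complex Metric

theorem stmt0 (R r ra θ : ℝ) (f : ℂ → ℂ)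
    (hR : 0 < R) (h1 : 0 ≤ ra) (h2 : ra ≤ r) (h3 : r < R)
    (hf : DifferentiableOn ℂ f (ball 0 R))
    (hpos : ∀ w ∈ ball (0:ℂ) R, 0 < (f w).re)
    (z a : ℂ) (hz : z = (r : ℂ) * exp (θ * I)) (ha : a = (ra : ℂ) * exp (θ * I))
    (n : ℕ) (hn : 1 ≤ n) :
    ‖iteratedDeriv n f z‖ ≤
      2 * n.factorial * R * (R - ra) / ((R - r) ^ (n + 1) * (R + ra)) * (f a).re := by
  have key : ∀ s : ℝ, r < s → s < R → ‖iteratedDeriv n f z‖ ≤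
      2 * (n.factorial:ℝ) * s * (s - ra) / ((s - r) ^ (n + 1) * (s + ra)) * (f a).re :=
    fun s hs1 hs2 => bound_s R r ra θ f h1 h2 hf hpos z a hz ha n hn hs1 hs2
  have hne : ((R - r) ^ (n + 1) * (R + ra)) ≠ 0 :=
    ne_of_gt (mul_pos (pow_pos (by linarith) _) (by linarith [le_trans h1 h2]))
  have hcont : ContinuousAt (fun s : ℝ =>
      2 * (n.factorial:ℝ) * s * (s - ra) / ((s - r) ^ (n + 1) * (s + ra)) * (f a).re) R := by
    apply ContinuousAt.mul _ continuousAt_const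
    apply ContinuousAt.div
    · fun_prop
    · fun_prop
    · exact hne
  have htend : Filter.Tendsto (fun s : ℝ =>
      2 * (n.factorial:ℝ) * s * (s - ra) / ((s - r) ^ (n + 1) * (s + ra)) * (f a).re)
      (nhdsWithin R (Set.Iio R))
      (nhds (2 * (n.factorial:ℝ) * R * (R - ra) / ((R - r) ^ (n + 1) * (R + ra)) * (f a).re)) :=
    hcont.tendsto.mono_left nhdsWithin_le_nhds
  refine ge_of_tendsto htend ?_
  filter_upwards [Ioo_mem_nhdsLT_of_mem (⟨h3, le_rfl⟩ : R ∈ Set.Ioc r R)] with s hs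
  exact key s hs.1 hs.2
end

section
/- Let f be holomorphic on the disc D_R with sup_{|ζ|<R} Re f(ζ) = M < ∞. Let z = r e^{iθ} and a = r_a e^{iθ} with 0 ≤ r_a ≤ r < R. Then for every n ≥ 1, |f^{(n)}(z)| ≤ (2 n! R (R - r_a)) / ((R - r)^{n+1} (R + r_a)) · (M - Re f(a)). -/
open Complex Metric Real intervalIntegral



lemma cauchy_aux {ρ : ℝ} (hρ : 0 < ρ) {g : ℂ → ℂ} {w : ℂ} (hw : w ∈ ball (0:ℂ) ρ)
    (hc : ContinuousOn g (closedBall 0 ρ))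
    (hd : ∀ x ∈ ball (0:ℂ) ρ, DifferentiableAt ℂ g x) :
    (∫ t in (0:ℝ)..2*π, circleMap 0 ρ t / (circleMap 0 ρ t - w) * g (circleMap 0 ρ t))
      = (2*π : ℝ) * g w := by
  have h := Complex.circleIntegral_sub_inv_smul_of_differentiable_on_off_countable
    (s := ∅) Set.countable_empty hw hc (by simpa using hd)
  rw [circleIntegral] at h
  simp only [deriv_circleMap, smul_eq_mul] at h
  have h2 : (I : ℂ) * ∫ t in (0:ℝ)..2*π,
      circleMap 0 ρ t / (circleMap 0 ρ t - w) * g (circleMap 0 ρ t) = I * ((2*π : ℝ) * g w) := by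
    rw [← intervalIntegral.integral_const_mul]
    calc ∫ t in (0:ℝ)..2*π, I * (circleMap 0 ρ t / (circleMap 0 ρ t - w) * g (circleMap 0 ρ t))
        = ∫ t in (0:ℝ)..2*π, circleMap 0 ρ t * I *
            ((circleMap 0 ρ t - w)⁻¹ * g (circleMap 0 ρ t)) := by
          refine intervalIntegral.integral_congr fun t _ => ?_
          rw [div_eq_mul_inv]; ring
      _ = I * ((2*π : ℝ) * g w) := by rw [h]; push_cast; ring
  exact mul_left_cancel₀ I_ne_zero h2


lemma key_ineq {ρ r ra : ℝ} (h1 : 0 ≤ ra) (h2 : ra ≤ r) (h3 : r < ρ) (θ t : ℝ)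
    {n : ℕ} (hn : 1 ≤ n) :
    (ρ - r)^(n+1) * ‖circleMap 0 ρ t - (ra:ℂ) * exp (θ*I)‖^2
      ≤ (ρ - ra)^2 * ‖circleMap 0 ρ t - (r:ℂ) * exp (θ*I)‖^2
          * ‖circleMap 0 ρ t - (r:ℂ) * exp (θ*I)‖^(n-1) := by
  have hρ0 : 0 < ρ := lt_of_le_of_lt (h1.trans h2) h3
  set ζ := circleMap 0 ρ t with hζdef
  have he : ‖exp (θ*I)‖ = 1 := by
    simp [Complex.norm_exp_ofReal_mul_I]
  have hζ : ‖ζ‖ = ρ := by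
    simp [hζdef, norm_circleMap_zero, _root_.abs_of_pos hρ0]
  have hnormz : ‖(r:ℂ) * exp (θ*I)‖ = r := by
    rw [norm_mul, he, mul_one, Complex.norm_real, Real.norm_eq_abs,
      _root_.abs_of_nonneg (h1.trans h2)]
  set s := (ζ * (starRingEnd ℂ) (exp (θ*I))).re with hsdef
  have hs : s ≤ ρ := by
    calc s ≤ |(ζ * (starRingEnd ℂ) (exp (θ*I))).re| := le_abs_self _
    _ ≤ ‖ζ * (starRingEnd ℂ) (exp (θ*I))‖ := Complex.abs_re_le_norm _
    _ = ρ := by rw [norm_mul, RCLike.norm_conj, he, mul_one, hζ]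
  have hexp : ∀ c : ℝ, 0 ≤ c → ‖ζ - (c:ℂ) * exp (θ*I)‖^2 = ρ^2 + c^2 - 2*c*s := by
    intro c hc
    rw [Complex.sq_norm, Complex.normSq_sub]
    have e1 : Complex.normSq ζ = ρ^2 := by
      rw [← Complex.sq_norm, hζ]
    have e2 : Complex.normSq ((c:ℂ) * exp (θ*I)) = c^2 := by
      rw [← Complex.sq_norm, norm_mul, he, mul_one,
        Complex.norm_real, Real.norm_eq_abs, _root_.sq_abs]
    have e3 : (ζ * (starRingEnd ℂ) ((c:ℂ) * exp (θ*I))).re = c * s := by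
      rw [map_mul, Complex.conj_ofReal, show ζ * ((c:ℂ) * (starRingEnd ℂ) (exp (θ*I)))
        = (c:ℂ) * (ζ * (starRingEnd ℂ) (exp (θ*I))) by ring, Complex.re_ofReal_mul]
    rw [e1, e2, e3]; ring
  have hA : (ρ - r)^2 * ‖ζ - (ra:ℂ) * exp (θ*I)‖^2
      ≤ (ρ - ra)^2 * ‖ζ - (r:ℂ) * exp (θ*I)‖^2 := by
    rw [hexp ra h1, hexp r (h1.trans h2)]
    have hrρ' : (0:ℝ) ≤ ρ - r := by linarith
    have k1 : (ρ-r)^2 ≤ (ρ-ra)^2 := pow_le_pow_left₀ hrρ' (by linarith) 2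
    have hh : ra*(ρ-r)^2 ≤ r*(ρ-ra)^2 :=
      le_trans (mul_le_mul_of_nonneg_left k1 h1) (mul_le_mul_of_nonneg_right h2 (by positivity))
    nlinarith [mul_nonneg (sub_nonneg.2 hs) (sub_nonneg.2 hh)]
  have hB : ρ - r ≤ ‖ζ - (r:ℂ) * exp (θ*I)‖ := by
    calc ρ - r = ‖ζ‖ - ‖(r:ℂ) * exp (θ*I)‖ := by rw [hζ, hnormz]
    _ ≤ _ := norm_sub_norm_le _ _
  have hrρ : (0:ℝ) ≤ ρ - r := le_of_lt (sub_pos.2 h3)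
  calc (ρ - r)^(n+1) * ‖ζ - (ra:ℂ) * exp (θ*I)‖^2
      = ((ρ-r)^2 * ‖ζ - (ra:ℂ) * exp (θ*I)‖^2) * (ρ-r)^(n-1) := by
        rw [show n+1 = 2 + (n-1) by omega, pow_add]; ring
    _ ≤ ((ρ - ra)^2 * ‖ζ - (r:ℂ) * exp (θ*I)‖^2) * ‖ζ - (r:ℂ) * exp (θ*I)‖^(n-1) := by
        apply mul_le_mul hA (pow_le_pow_left₀ hrρ hB _) (pow_nonneg hrρ _)
        positivity


lemma kernel_id {ρ : ℝ} (hρ : 0 < ρ) {w : ℂ} (hw : ‖w‖ < ρ) (t : ℝ) :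
    circleMap 0 ρ t / (circleMap 0 ρ t - w)
      + (starRingEnd ℂ w) * circleMap 0 ρ t / ((ρ^2:ℝ) - (starRingEnd ℂ w) * circleMap 0 ρ t)
      = (((ρ^2 - ‖w‖^2) / ‖circleMap 0 ρ t - w‖^2 : ℝ) : ℂ) := by
  set ζ := circleMap 0 ρ t with hζdef
  have hζn : ‖ζ‖ = ρ := by
    simp [hζdef, norm_circleMap_zero, _root_.abs_of_pos hρ]
  have hmc : ζ * (starRingEnd ℂ) ζ = ((ρ^2 : ℝ) : ℂ) := by
    rw [Complex.mul_conj, ← Complex.sq_norm, hζn]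
  have h1 : ζ - w ≠ 0 := sub_ne_zero.2 fun h => (ne_of_lt hw) (h ▸ hζn)
  have h1' : (starRingEnd ℂ) (ζ - w) ≠ 0 := fun h => h1 (by
    have := congrArg (starRingEnd ℂ) h; simpa using this)
  have h2 : ((ρ^2:ℝ):ℂ) - (starRingEnd ℂ w) * ζ ≠ 0 := by
    intro h
    have : ‖(starRingEnd ℂ w) * ζ‖ = ρ^2 := by
      rw [← sub_eq_zero.1 h, Complex.norm_real, Real.norm_eq_abs,
        _root_.abs_of_nonneg (by positivity)]
    rw [norm_mul, RCLike.norm_conj, hζn] at this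
    nlinarith [norm_nonneg w, hw]
  have hw2 : ((‖w‖^2 : ℝ) : ℂ) = w * (starRingEnd ℂ) w := by
    rw [Complex.mul_conj, ← Complex.sq_norm]
  have hd : ((‖ζ - w‖^2 : ℝ) : ℂ) = (ζ - w) * (starRingEnd ℂ) (ζ - w) := by
    rw [Complex.mul_conj, ← Complex.sq_norm]
  have hd' : ((‖ζ - w‖^2 : ℝ) : ℂ) ≠ 0 := by rw [hd]; exact mul_ne_zero h1 h1'
  rw [Complex.ofReal_div, div_add_div _ _ h1 h2, div_eq_div_iff (mul_ne_zero h1 h2) hd',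
    Complex.ofReal_sub, hw2, hd]
  simp only [map_sub]
  linear_combination (((ρ^2:ℝ):ℂ) - (starRingEnd ℂ) w * w) * (ζ - w) * hmc


lemma circleMap_norm {ρ : ℝ} (hρ : 0 < ρ) (t : ℝ) : ‖circleMap 0 ρ t‖ = ρ := by
  simp [norm_circleMap_zero, _root_.abs_of_pos hρ]

lemma circleMap_sub_ne {ρ : ℝ} (hρ : 0 < ρ) {x : ℂ} (hx : ‖x‖ < ρ) (t : ℝ) :
    circleMap 0 ρ t - x ≠ 0 :=
  sub_ne_zero.2 fun h => (ne_of_lt hx) (by rw [← h]; exact circleMap_norm hρ t)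

lemma Fk_cont {ρ : ℝ} (hρ : 0 < ρ) {u : ℝ → ℝ} (hu : Continuous u) (k : ℕ) {x : ℂ}
    (hx : ‖x‖ < ρ) :
    Continuous (fun t => (u t : ℂ) * (circleMap 0 ρ t / (circleMap 0 ρ t - x)^(k+1))) :=
  (Complex.continuous_ofReal.comp hu).mul
    ((continuous_circleMap 0 ρ).div (((continuous_circleMap 0 ρ).sub continuous_const).pow (k+1))
      (fun t => pow_ne_zero _ (circleMap_sub_ne hρ hx t)))

lemma Fk_hasDerivAt {ρ : ℝ} (hρ : 0 < ρ) {u : ℝ → ℝ} (hu : Continuous u) (k : ℕ)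
    {w₀ : ℂ} (hw : w₀ ∈ ball (0:ℂ) ρ) :
    HasDerivAt (fun w => ∫ t in (0:ℝ)..2*π,
        (u t : ℂ) * (circleMap 0 ρ t / (circleMap 0 ρ t - w)^(k+1)))
      (((k:ℂ)+1) * ∫ t in (0:ℝ)..2*π,
        (u t : ℂ) * (circleMap 0 ρ t / (circleMap 0 ρ t - w₀)^(k+2))) w₀ := by
  have hw' : ‖w₀‖ < ρ := by simpa [dist_eq_norm] using hw
  set ε := (ρ - ‖w₀‖)/2 with hε
  have hε0 : 0 < ε := by rw [hε]; linarith
  have hlow : ∀ (x : ℂ), x ∈ ball w₀ ε → ε ≤ ρ - ‖x‖ ∧ ∀ t : ℝ, ε ≤ ‖circleMap 0 ρ t - x‖ := by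
    intro x hx
    have h1 : ‖x‖ < ‖w₀‖ + ε := by
      have h2 := mem_ball_iff_norm.1 hx
      calc ‖x‖ ≤ ‖w₀‖ + ‖x - w₀‖ := by
            have := norm_add_le (x - w₀) w₀; simpa [add_comm] using this
        _ < ‖w₀‖ + ε := by linarith
    constructor
    · rw [hε] at h1 ⊢; linarith
    · intro t
      calc ε = ρ - (‖w₀‖ + ε) := by rw [hε]; ring
        _ ≤ ‖circleMap 0 ρ t‖ - ‖x‖ := by rw [circleMap_norm hρ t]; linarith
        _ ≤ ‖circleMap 0 ρ t - x‖ := norm_sub_norm_le _ _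
  have hball : ∀ x : ℂ, x ∈ ball w₀ ε → ‖x‖ < ρ := fun x hx => by
    have := (hlow x hx).1; linarith
  set F' : ℂ → ℝ → ℂ := fun x t =>
    ((k:ℂ)+1) * ((u t : ℂ) * (circleMap 0 ρ t / (circleMap 0 ρ t - x)^(k+2))) with hF'
  have key := intervalIntegral.hasDerivAt_integral_of_dominated_loc_of_deriv_le
    (F := fun w t => (u t : ℂ) * (circleMap 0 ρ t / (circleMap 0 ρ t - w)^(k+1)))
    (F' := F') (x₀ := w₀) (a := 0) (b := 2*π) (μ := MeasureTheory.volume)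
    (bound := fun t => |u t| * (((k:ℝ)+1) * ρ / ε^(k+2))) (ball_mem_nhds w₀ hε0)
    ?_ ?_ ?_ ?_ ?_ ?_
  · rcases key with ⟨-, hd⟩
    refine hd.congr_deriv ?_
    rw [hF', intervalIntegral.integral_const_mul]
  · filter_upwards [isOpen_ball.eventually_mem hw] with x hx
    exact (Fk_cont hρ hu k (by simpa [dist_eq_norm] using hx)).aestronglyMeasurable
  · exact (Fk_cont hρ hu k hw').intervalIntegrable _ _
  · exact (continuous_const.mul (Fk_cont hρ hu (k+1) hw')).aestronglyMeasurable
  · refine Filter.Eventually.of_forall fun t _ x hx => ?_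
    have h1 : ε ≤ ‖circleMap 0 ρ t - x‖ := (hlow x hx).2 t
    show ‖F' x t‖ ≤ |u t| * (((k:ℝ)+1) * ρ / ε^(k+2))
    have e1 : ‖(k:ℂ)+1‖ = (k:ℝ)+1 := by
      rw [show ((k:ℂ)+1) = ((k+1 : ℕ) : ℂ) by push_cast; ring, Complex.norm_natCast]
      push_cast; ring
    have e2 : ‖((u t : ℝ) : ℂ)‖ = |u t| := by simp
    have h2 : ρ / ‖circleMap 0 ρ t - x‖^(k+2) ≤ ρ / ε^(k+2) := by
      apply div_le_div_of_nonneg_left (le_of_lt hρ) (by positivity)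
      exact pow_le_pow_left₀ (le_of_lt hε0) h1 _
    calc ‖F' x t‖ = ((k:ℝ)+1) * (|u t| * (ρ / ‖circleMap 0 ρ t - x‖^(k+2))) := by
          rw [hF']
          simp only [norm_mul, norm_div, norm_pow]
          rw [e1, e2, circleMap_norm hρ t]
      _ ≤ ((k:ℝ)+1) * (|u t| * (ρ / ε^(k+2))) :=
          mul_le_mul_of_nonneg_left (mul_le_mul_of_nonneg_left h2 (abs_nonneg _)) (by positivity)
      _ = |u t| * (((k:ℝ)+1) * ρ / ε^(k+2)) := by ring
  · exact (hu.abs.mul continuous_const).intervalIntegrable _ _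
  · refine Filter.Eventually.of_forall fun t _ x hx => ?_
    have hne : circleMap 0 ρ t - x ≠ 0 := circleMap_sub_ne hρ (hball x hx) t
    set ζ := circleMap 0 ρ t with hζ
    have h0 : HasDerivAt (fun x : ℂ => ζ - x) (-1) x := by
      simpa using (hasDerivAt_id x).const_sub ζ
    have hpow : HasDerivAt (fun x : ℂ => (ζ - x)^(k+1))
        (((k:ℂ)+1) * (ζ - x)^k * (-1)) x := by
      have := h0.fun_pow (k+1)
      simpa using this
    have hinv : HasDerivAt (fun x : ℂ => ((ζ - x)^(k+1))⁻¹)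
        (-(((k:ℂ)+1) * (ζ - x)^k * (-1)) / ((ζ - x)^(k+1))^2) x :=
      hpow.inv (pow_ne_zero _ hne)
    have hmul := hinv.const_mul ((u t : ℂ) * ζ)
    have heq : (fun x : ℂ => (u t : ℂ) * (ζ / (ζ - x)^(k+1)))
        = fun x : ℂ => (u t : ℂ) * ζ * ((ζ - x)^(k+1))⁻¹ := by
      funext y; rw [div_eq_mul_inv]; ring
    rw [heq]
    refine hmul.congr_deriv ?_
    rw [hF']
    show _ = ((k:ℂ)+1) * ((u t : ℂ) * (ζ / (ζ - x)^(k+2)))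
    field_simp
    ring
  done

lemma Fk_iter {ρ : ℝ} (hρ : 0 < ρ) {u : ℝ → ℝ} (hu : Continuous u) (n : ℕ) :
    ∀ w ∈ ball (0:ℂ) ρ,
    iteratedDeriv n (fun w => ∫ t in (0:ℝ)..2*π,
        (u t:ℂ) * (circleMap 0 ρ t / (circleMap 0 ρ t - w))) w
      = (n.factorial : ℂ) * ∫ t in (0:ℝ)..2*π,
          (u t:ℂ) * (circleMap 0 ρ t / (circleMap 0 ρ t - w)^(n+1)) := by
  induction n with
  | zero =>
    intro w hw
    simp only [iteratedDeriv_zero, Nat.factorial_zero, Nat.cast_one, one_mul, zero_add, pow_one]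
  | succ n ih =>
    intro w hw
    rw [iteratedDeriv_succ]
    have hev : iteratedDeriv n (fun w => ∫ t in (0:ℝ)..2*π,
          (u t:ℂ) * (circleMap 0 ρ t / (circleMap 0 ρ t - w)))
        =ᶠ[nhds w] fun x => (n.factorial : ℂ) * ∫ t in (0:ℝ)..2*π,
          (u t:ℂ) * (circleMap 0 ρ t / (circleMap 0 ρ t - x)^(n+1)) := by
      filter_upwards [isOpen_ball.eventually_mem hw] with x hx
      exact ih x hx
    rw [hev.deriv_eq]
    have hd := (Fk_hasDerivAt hρ hu n hw).const_mul (n.factorial : ℂ)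
    rw [hd.deriv, show n+1+1 = n+2 from rfl, Nat.factorial_succ]
    push_cast
    ring


lemma iter_cmul (c : ℂ) (f : ℂ → ℂ) : ∀ (m : ℕ),
    iteratedDeriv m (fun w => c * f w) = fun x => c * iteratedDeriv m f x := by
  intro m
  induction m generalizing f with
  | zero => simp
  | succ m ih =>
    rw [iteratedDeriv_succ', iteratedDeriv_succ']
    have : (deriv fun w => c * f w) = fun x => c * deriv f x := by
      funext x; exact deriv_const_mul_field c
    rw [this, ih]

lemma iter_cmul_add (c d : ℂ) (f : ℂ → ℂ) {n : ℕ} (hn : 1 ≤ n) :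
    iteratedDeriv n (fun w => c * f w + d) = fun x => c * iteratedDeriv n f x := by
  obtain ⟨m, rfl⟩ : ∃ m, n = m + 1 := ⟨n - 1, by omega⟩
  rw [iteratedDeriv_succ', iteratedDeriv_succ']
  have : (deriv fun w => c * f w + d) = fun x => c * deriv f x := by
    funext x; rw [deriv_add_const]; exact deriv_const_mul_field c
  rw [this, iter_cmul]

lemma intervalIntegral_conj_s1 {f : ℝ → ℂ} {a b : ℝ} :
    (∫ t in a..b, (starRingEnd ℂ) (f t)) = (starRingEnd ℂ) (∫ t in a..b, f t) := by
  rw [intervalIntegral, intervalIntegral, integral_conj, integral_conj, ← map_sub]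

lemma main_est (R r ra θ M : ℝ) (f : ℂ → ℂ)
    (h1 : 0 ≤ ra) (h2 : ra ≤ r) (h3 : r < R)
    (hf : DifferentiableOn ℂ f (ball 0 R))
    (hM : IsLUB ((fun w => (f w).re) '' ball (0:ℂ) R) M)
    {z a : ℂ} (hz : z = (r : ℂ) * exp (θ * I)) (ha : a = (ra : ℂ) * exp (θ * I))
    {n : ℕ} (hn : 1 ≤ n) {ρ : ℝ} (hrρ : r < ρ) (hρR : ρ < R) :
    ‖iteratedDeriv n f z‖ ≤
      2 * n.factorial * ρ * (ρ - ra) / ((ρ - r) ^ (n + 1) * (ρ + ra)) * (M - (f a).re) := by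
  have hr0 : 0 ≤ r := h1.trans h2
  have hρ0 : 0 < ρ := lt_of_le_of_lt hr0 hrρ
  have hexp1 : ‖exp ((θ:ℝ) * I)‖ = 1 := by
    simp [Complex.norm_exp_ofReal_mul_I]
  have hnz : ‖z‖ = r := by
    rw [hz, norm_mul, hexp1, mul_one, Complex.norm_real, Real.norm_eq_abs,
      _root_.abs_of_nonneg hr0]
  have hna : ‖a‖ = ra := by
    rw [ha, norm_mul, hexp1, mul_one, Complex.norm_real, Real.norm_eq_abs,
      _root_.abs_of_nonneg h1]
  have hzρ : ‖z‖ < ρ := by rw [hnz]; exact hrρ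
  have haρ : ‖a‖ < ρ := by rw [hna]; linarith
  have hzb : z ∈ ball (0:ℂ) ρ := mem_ball_zero_iff.2 hzρ
  have hab : a ∈ ball (0:ℂ) ρ := mem_ball_zero_iff.2 haρ
  have hsub : closedBall (0:ℂ) ρ ⊆ ball 0 R := closedBall_subset_ball hρR
  have hcont : ContinuousOn f (closedBall 0 ρ) := hf.continuousOn.mono hsub
  have hdat : ∀ x ∈ ball (0:ℂ) ρ, DifferentiableAt ℂ f x := fun x hx =>
    hf.differentiableAt (isOpen_ball.mem_nhds ((ball_subset_ball hρR.le) hx))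
  have hmemc : ∀ t : ℝ, circleMap 0 ρ t ∈ closedBall (0:ℂ) ρ := fun t =>
    circleMap_mem_closedBall 0 hρ0.le t
  have hfc : Continuous fun t => f (circleMap 0 ρ t) :=
    hcont.comp_continuous (continuous_circleMap 0 ρ) hmemc
  set u : ℝ → ℝ := fun t => (f (circleMap 0 ρ t)).re - M with hu_def
  have hu : Continuous u := (Complex.continuous_re.comp hfc).sub continuous_const
  -- continuity of kernels
  have hXc : ∀ {w : ℂ}, ‖w‖ < ρ → Continuous fun t => circleMap 0 ρ t / (circleMap 0 ρ t - w) :=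
    fun {w} hw => (continuous_circleMap 0 ρ).div ((continuous_circleMap 0 ρ).sub continuous_const)
      (fun t => circleMap_sub_ne hρ0 hw t)
  have hden : ∀ {w : ℂ}, ‖w‖ < ρ → ∀ x ∈ closedBall (0:ℂ) ρ,
      ((ρ^2:ℝ):ℂ) - (starRingEnd ℂ) w * x ≠ 0 := by
    intro w hw x hx h
    have hx' : ‖x‖ ≤ ρ := mem_closedBall_zero_iff.1 hx
    have h5 : ‖(starRingEnd ℂ) w * x‖ = ρ^2 := by
      rw [← sub_eq_zero.1 h, Complex.norm_real, Real.norm_eq_abs,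
        _root_.abs_of_nonneg (by positivity)]
    rw [norm_mul, RCLike.norm_conj] at h5
    nlinarith [norm_nonneg w, norm_nonneg x]
  -- S1 : Cauchy formula
  have S1 : ∀ g : ℂ → ℂ, ContinuousOn g (closedBall 0 ρ) →
      (∀ x ∈ ball (0:ℂ) ρ, DifferentiableAt ℂ g x) → ∀ w ∈ ball (0:ℂ) ρ,
      (∫ t in (0:ℝ)..2*π, g (circleMap 0 ρ t) * (circleMap 0 ρ t / (circleMap 0 ρ t - w)))
        = (2*π:ℝ) * g w := by
    intro g hgc hgd w hw
    rw [← cauchy_aux hρ0 hw hgc hgd]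
    exact intervalIntegral.integral_congr fun t _ => mul_comm _ _
  -- S2 : mean value
  have S2 : ∀ g : ℂ → ℂ, ContinuousOn g (closedBall 0 ρ) →
      (∀ x ∈ ball (0:ℂ) ρ, DifferentiableAt ℂ g x) →
      (∫ t in (0:ℝ)..2*π, g (circleMap 0 ρ t)) = (2*π:ℝ) * g 0 := by
    intro g hgc hgd
    rw [← cauchy_aux hρ0 (mem_ball_self hρ0) hgc hgd]
    refine intervalIntegral.integral_congr fun t _ => ?_
    rw [sub_zero, div_self (circleMap_ne_center (ne_of_gt hρ0)), one_mul]
  -- C2 : vanishing reflected integral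
  have C2 : ∀ g : ℂ → ℂ, ContinuousOn g (closedBall 0 ρ) →
      (∀ x ∈ ball (0:ℂ) ρ, DifferentiableAt ℂ g x) → ∀ w : ℂ, ‖w‖ < ρ →
      (∫ t in (0:ℝ)..2*π, g (circleMap 0 ρ t) *
        ((starRingEnd ℂ) w * circleMap 0 ρ t / ((ρ^2:ℝ) - (starRingEnd ℂ) w * circleMap 0 ρ t)))
        = 0 := by
    intro g hgc hgd w hw
    have hgc2 : ContinuousOn (fun x => g x * ((starRingEnd ℂ) w * x /
        (((ρ^2:ℝ):ℂ) - (starRingEnd ℂ) w * x))) (closedBall 0 ρ) := by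
      apply hgc.mul
      exact (continuousOn_const.mul (continuousOn_id)).div
        (continuousOn_const.sub (continuousOn_const.mul continuousOn_id)) (hden hw)
    have hgd2 : ∀ x ∈ ball (0:ℂ) ρ, DifferentiableAt ℂ (fun x => g x * ((starRingEnd ℂ) w * x /
        (((ρ^2:ℝ):ℂ) - (starRingEnd ℂ) w * x))) x := by
      intro x hx
      exact (hgd x hx).mul (((differentiableAt_const _).mul differentiableAt_id).div
        ((differentiableAt_const _).sub ((differentiableAt_const _).mul differentiableAt_id))
        (hden hw x (ball_subset_closedBall hx)))
    have h0 := S2 _ hgc2 hgd2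
    simpa using h0
  -- C1 : conjugate integral
  have C1 : ∀ w : ℂ, ‖w‖ < ρ →
      (∫ t in (0:ℝ)..2*π, (starRingEnd ℂ) (f (circleMap 0 ρ t)) *
          (circleMap 0 ρ t / (circleMap 0 ρ t - w)))
        = (2*π:ℝ) * (starRingEnd ℂ) (f 0) := by
    intro w hw
    set g : ℂ → ℂ := fun x => f x * (((ρ^2:ℝ):ℂ) / (((ρ^2:ℝ):ℂ) - (starRingEnd ℂ) w * x))
      with hg
    have hgc : ContinuousOn g (closedBall 0 ρ) :=
      hcont.mul (continuousOn_const.div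
        (continuousOn_const.sub (continuousOn_const.mul continuousOn_id)) (hden hw))
    have hgd : ∀ x ∈ ball (0:ℂ) ρ, DifferentiableAt ℂ g x := fun x hx =>
      (hdat x hx).mul ((differentiableAt_const _).div
        ((differentiableAt_const _).sub ((differentiableAt_const _).mul differentiableAt_id))
        (hden hw x (ball_subset_closedBall hx)))
    have hmean := S2 g hgc hgd
    have hρ2 : ((ρ^2:ℝ):ℂ) ≠ 0 := by
      simp only [ne_eq, Complex.ofReal_eq_zero]; exact pow_ne_zero 2 (ne_of_gt hρ0)
    have hg0 : g 0 = f 0 := by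
      rw [hg]; simp only [mul_zero, sub_zero, div_self hρ2, mul_one]
    have hpt : ∀ t : ℝ, (starRingEnd ℂ) (g (circleMap 0 ρ t))
        = (starRingEnd ℂ) (f (circleMap 0 ρ t)) * (circleMap 0 ρ t / (circleMap 0 ρ t - w)) := by
      intro t
      set ζ := circleMap 0 ρ t with hζdef
      have hmc : ζ * (starRingEnd ℂ) ζ = ((ρ^2 : ℝ) : ℂ) := by
        rw [Complex.mul_conj, ← Complex.sq_norm, circleMap_norm hρ0]
      have hne1 : ζ - w ≠ 0 := circleMap_sub_ne hρ0 hw t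
      have hne2 : ((ρ^2:ℝ):ℂ) - w * (starRingEnd ℂ) ζ ≠ 0 := by
        intro h
        have h5 : ‖w * (starRingEnd ℂ) ζ‖ = ρ^2 := by
          rw [← sub_eq_zero.1 h, Complex.norm_real, Real.norm_eq_abs,
            _root_.abs_of_nonneg (by positivity)]
        rw [norm_mul, RCLike.norm_conj, circleMap_norm hρ0] at h5
        nlinarith [norm_nonneg w]
      rw [hg]
      simp only [map_mul, map_div₀, map_sub, Complex.conj_ofReal, Complex.conj_conj]
      congr 1
      rw [div_eq_div_iff hne2 hne1]
      linear_combination w * hmc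
    calc (∫ t in (0:ℝ)..2*π, (starRingEnd ℂ) (f (circleMap 0 ρ t)) *
            (circleMap 0 ρ t / (circleMap 0 ρ t - w)))
        = ∫ t in (0:ℝ)..2*π, (starRingEnd ℂ) (g (circleMap 0 ρ t)) :=
          (intervalIntegral.integral_congr fun t _ => (hpt t).symm)
      _ = (starRingEnd ℂ) (∫ t in (0:ℝ)..2*π, g (circleMap 0 ρ t)) := _root_.intervalIntegral_conj_s1
      _ = (2*π:ℝ) * (starRingEnd ℂ) (f 0) := by
          rw [hmean, hg0, map_mul, Complex.conj_ofReal]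
  -- I1 : Schwarz-type representation on the ball
  have hint_one : ∀ {w:ℂ}, ‖w‖ < ρ →
      (∫ t in (0:ℝ)..2*π, (circleMap 0 ρ t / (circleMap 0 ρ t - w))) = ((2*π:ℝ):ℂ) := by
    intro w hw
    have h0 := S1 (fun _ => (1:ℂ)) continuousOn_const (fun x _ => differentiableAt_const _) w
      (mem_ball_zero_iff.2 hw)
    simpa using h0
  have I1 : ∀ w ∈ ball (0:ℂ) ρ,
      (∫ t in (0:ℝ)..2*π, (u t : ℂ) * (circleMap 0 ρ t / (circleMap 0 ρ t - w)))
        = ((π:ℝ):ℂ) * f w + (((π:ℝ):ℂ) * (starRingEnd ℂ) (f 0) - ((2*π:ℝ):ℂ) * M) := by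
    intro w hw
    have hw' : ‖w‖ < ρ := mem_ball_zero_iff.1 hw
    have i1 : IntervalIntegrable (fun t => f (circleMap 0 ρ t) *
        (circleMap 0 ρ t / (circleMap 0 ρ t - w))) MeasureTheory.volume 0 (2*π) :=
      (hfc.mul (hXc hw')).intervalIntegrable _ _
    have i2 : IntervalIntegrable (fun t => (starRingEnd ℂ) (f (circleMap 0 ρ t)) *
        (circleMap 0 ρ t / (circleMap 0 ρ t - w))) MeasureTheory.volume 0 (2*π) :=
      ((Complex.continuous_conj.comp hfc).mul (hXc hw')).intervalIntegrable _ _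
    have i3 : IntervalIntegrable (fun t => (M:ℂ) *
        (circleMap 0 ρ t / (circleMap 0 ρ t - w))) MeasureTheory.volume 0 (2*π) :=
      (continuous_const.mul (hXc hw')).intervalIntegrable _ _
    have e1 := S1 f hcont hdat w hw
    have e2 := C1 w hw'
    have e3 := hint_one hw'
    calc (∫ t in (0:ℝ)..2*π, (u t : ℂ) * (circleMap 0 ρ t / (circleMap 0 ρ t - w)))
        = ∫ t in (0:ℝ)..2*π, ((1/2:ℂ) * (f (circleMap 0 ρ t) *
              (circleMap 0 ρ t / (circleMap 0 ρ t - w)))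
            + ((1/2:ℂ) * ((starRingEnd ℂ) (f (circleMap 0 ρ t)) *
              (circleMap 0 ρ t / (circleMap 0 ρ t - w)))
              - (M:ℂ) * (circleMap 0 ρ t / (circleMap 0 ρ t - w)))) := by
          refine intervalIntegral.integral_congr fun t _ => ?_
          have hcast : ((u t:ℝ):ℂ) = (f (circleMap 0 ρ t)
              + (starRingEnd ℂ) (f (circleMap 0 ρ t)))/2 - M := by
            rw [hu_def]; push_cast [Complex.add_conj]; ring
          rw [hcast]; ring
      _ = (1/2:ℂ) * (∫ t in (0:ℝ)..2*π, f (circleMap 0 ρ t) *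
              (circleMap 0 ρ t / (circleMap 0 ρ t - w)))
            + ((1/2:ℂ) * (∫ t in (0:ℝ)..2*π, (starRingEnd ℂ) (f (circleMap 0 ρ t)) *
              (circleMap 0 ρ t / (circleMap 0 ρ t - w)))
              - (M:ℂ) * (∫ t in (0:ℝ)..2*π, circleMap 0 ρ t / (circleMap 0 ρ t - w))) := by
          rw [intervalIntegral.integral_add (i1.const_mul _) ((i2.const_mul _).sub i3),
            intervalIntegral.integral_sub (i2.const_mul _) i3,
            intervalIntegral.integral_const_mul, intervalIntegral.integral_const_mul,
            intervalIntegral.integral_const_mul]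
      _ = ((π:ℝ):ℂ) * f w + (((π:ℝ):ℂ) * (starRingEnd ℂ) (f 0) - ((2*π:ℝ):ℂ) * M) := by
          rw [e1, e2, e3]; push_cast; ring
  -- the Poisson kernel
  set K : ℝ → ℝ := fun t => (ρ^2 - ‖a‖^2)/‖circleMap 0 ρ t - a‖^2 with hK_def
  have hKc : Continuous K := by
    apply continuous_const.div (((continuous_circleMap 0 ρ).sub continuous_const).norm.pow 2)
    intro t; exact pow_ne_zero _ (norm_ne_zero_iff.2 (circleMap_sub_ne hρ0 haρ t))
  have hK0 : ∀ t, 0 ≤ K t := by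
    intro t
    apply div_nonneg _ (sq_nonneg _)
    nlinarith [norm_nonneg a]
  have hKid : ∀ t : ℝ, ((K t : ℝ):ℂ) = circleMap 0 ρ t / (circleMap 0 ρ t - a)
      + (starRingEnd ℂ) a * circleMap 0 ρ t / ((ρ^2:ℝ) - (starRingEnd ℂ) a * circleMap 0 ρ t) :=
    fun t => (kernel_id hρ0 haρ t).symm
  have hYc : Continuous fun t => (starRingEnd ℂ) a * circleMap 0 ρ t /
      (((ρ^2:ℝ):ℂ) - (starRingEnd ℂ) a * circleMap 0 ρ t) := by
    apply Continuous.div (continuous_const.mul (continuous_circleMap 0 ρ))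
      (continuous_const.sub (continuous_const.mul (continuous_circleMap 0 ρ)))
    intro t; exact hden haρ _ (hmemc t)
  have hIfK : (∫ t in (0:ℝ)..2*π, f (circleMap 0 ρ t) * ((K t:ℝ):ℂ)) = ((2*π:ℝ):ℂ) * f a := by
    have i1 : IntervalIntegrable (fun t => f (circleMap 0 ρ t) *
        (circleMap 0 ρ t / (circleMap 0 ρ t - a))) MeasureTheory.volume 0 (2*π) :=
      (hfc.mul (hXc haρ)).intervalIntegrable _ _
    have i2 : IntervalIntegrable (fun t => f (circleMap 0 ρ t) * ((starRingEnd ℂ) a *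
        circleMap 0 ρ t / (((ρ^2:ℝ):ℂ) - (starRingEnd ℂ) a * circleMap 0 ρ t)))
        MeasureTheory.volume 0 (2*π) := (hfc.mul hYc).intervalIntegrable _ _
    calc (∫ t in (0:ℝ)..2*π, f (circleMap 0 ρ t) * ((K t:ℝ):ℂ))
        = ∫ t in (0:ℝ)..2*π, (f (circleMap 0 ρ t) * (circleMap 0 ρ t / (circleMap 0 ρ t - a))
            + f (circleMap 0 ρ t) * ((starRingEnd ℂ) a * circleMap 0 ρ t /
              (((ρ^2:ℝ):ℂ) - (starRingEnd ℂ) a * circleMap 0 ρ t))) := by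
          refine intervalIntegral.integral_congr fun t _ => ?_
          rw [hKid t]; ring
      _ = (∫ t in (0:ℝ)..2*π, f (circleMap 0 ρ t) * (circleMap 0 ρ t / (circleMap 0 ρ t - a)))
            + ∫ t in (0:ℝ)..2*π, f (circleMap 0 ρ t) * ((starRingEnd ℂ) a * circleMap 0 ρ t /
              (((ρ^2:ℝ):ℂ) - (starRingEnd ℂ) a * circleMap 0 ρ t)) :=
          intervalIntegral.integral_add i1 i2
      _ = ((2*π:ℝ):ℂ) * f a := by
          rw [S1 f hcont hdat a hab, C2 f hcont hdat a haρ]; ring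
  have hIK : (∫ t in (0:ℝ)..2*π, K t) = 2*π := by
    have i1 : IntervalIntegrable (fun t => circleMap 0 ρ t / (circleMap 0 ρ t - a))
        MeasureTheory.volume 0 (2*π) := (hXc haρ).intervalIntegrable _ _
    have i2 : IntervalIntegrable (fun t => (starRingEnd ℂ) a * circleMap 0 ρ t /
        (((ρ^2:ℝ):ℂ) - (starRingEnd ℂ) a * circleMap 0 ρ t)) MeasureTheory.volume 0 (2*π) :=
      hYc.intervalIntegrable _ _
    have hC : (∫ t in (0:ℝ)..2*π, ((K t:ℝ):ℂ)) = ((2*π:ℝ):ℂ) := by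
      have hzero := C2 (fun _ => (1:ℂ)) continuousOn_const (fun x _ => differentiableAt_const _)
        a haρ
      simp only [one_mul] at hzero
      calc (∫ t in (0:ℝ)..2*π, ((K t:ℝ):ℂ))
          = ∫ t in (0:ℝ)..2*π, (circleMap 0 ρ t / (circleMap 0 ρ t - a)
              + (starRingEnd ℂ) a * circleMap 0 ρ t /
                (((ρ^2:ℝ):ℂ) - (starRingEnd ℂ) a * circleMap 0 ρ t)) :=
            intervalIntegral.integral_congr fun t _ => hKid t
        _ = _ + _ := intervalIntegral.integral_add i1 i2
        _ = ((2*π:ℝ):ℂ) := by rw [hint_one haρ, hzero]; ring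
    have hcomm := Complex.ofRealCLM.intervalIntegral_comp_comm
      (hKc.intervalIntegrable (μ := MeasureTheory.volume) 0 (2*π))
    simp only [Complex.ofRealCLM_apply] at hcomm
    rw [hcomm] at hC
    exact_mod_cast hC
  have hIfKre : (∫ t in (0:ℝ)..2*π, (f (circleMap 0 ρ t)).re * K t) = 2*π*(f a).re := by
    have iC : IntervalIntegrable (fun t => f (circleMap 0 ρ t) * ((K t:ℝ):ℂ))
        MeasureTheory.volume 0 (2*π) :=
      (hfc.mul (Complex.continuous_ofReal.comp hKc)).intervalIntegrable _ _
    have hcomm := Complex.reCLM.intervalIntegral_comp_comm iC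
    calc (∫ t in (0:ℝ)..2*π, (f (circleMap 0 ρ t)).re * K t)
        = ∫ t in (0:ℝ)..2*π, Complex.reCLM (f (circleMap 0 ρ t) * ((K t:ℝ):ℂ)) := by
          refine intervalIntegral.integral_congr fun t _ => ?_
          simp [Complex.re_mul_ofReal]
      _ = Complex.reCLM (∫ t in (0:ℝ)..2*π, f (circleMap 0 ρ t) * ((K t:ℝ):ℂ)) := hcomm
      _ = 2*π*(f a).re := by
          rw [hIfK]; simp [Complex.re_ofReal_mul]
  have I2 : (∫ t in (0:ℝ)..2*π, u t * K t) = 2*π*((f a).re - M) := by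
    have iA : IntervalIntegrable (fun t => (f (circleMap 0 ρ t)).re * K t)
        MeasureTheory.volume 0 (2*π) := ((Complex.continuous_re.comp hfc).mul hKc).intervalIntegrable _ _
    have iB : IntervalIntegrable (fun t => M * K t) MeasureTheory.volume 0 (2*π) :=
      (continuous_const.mul hKc).intervalIntegrable _ _
    calc (∫ t in (0:ℝ)..2*π, u t * K t)
        = ∫ t in (0:ℝ)..2*π, ((f (circleMap 0 ρ t)).re * K t - M * K t) := by
          refine intervalIntegral.integral_congr fun t _ => ?_
          rw [hu_def]; ring
      _ = (∫ t in (0:ℝ)..2*π, (f (circleMap 0 ρ t)).re * K t)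
            - ∫ t in (0:ℝ)..2*π, M * K t := intervalIntegral.integral_sub iA iB
      _ = 2*π*((f a).re - M) := by
          rw [hIfKre, intervalIntegral.integral_const_mul, hIK]; ring
  -- nonpositivity of u
  have hu0 : ∀ t : ℝ, u t ≤ 0 := by
    intro t
    have hmem : circleMap 0 ρ t ∈ ball (0:ℂ) R := hsub (hmemc t)
    have hle : (f (circleMap 0 ρ t)).re ≤ M := hM.1 ⟨circleMap 0 ρ t, hmem, rfl⟩
    rw [hu_def]; simp only; linarith
  set c₀ : ℝ := ρ * (ρ - ra) / ((ρ - r)^(n+1) * (ρ + ra)) with hc₀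
  have hρr : 0 < ρ - r := by linarith
  have hρra : 0 < ρ + ra := by linarith
  have hc₀0 : 0 ≤ c₀ :=
    div_nonneg (mul_nonneg hρ0.le (by linarith)) (le_of_lt (mul_pos (pow_pos hρr _) hρra))
  -- pointwise bound
  have hpt : ∀ t : ℝ, ‖(u t : ℂ) * (circleMap 0 ρ t / (circleMap 0 ρ t - z)^(n+1))‖
      ≤ (-u t) * (c₀ * K t) := by
    intro t
    have hzpos : 0 < ‖circleMap 0 ρ t - z‖ :=
      norm_pos_iff.2 (circleMap_sub_ne hρ0 hzρ t)
    have hapos : 0 < ‖circleMap 0 ρ t - a‖ :=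
      norm_pos_iff.2 (circleMap_sub_ne hρ0 haρ t)
    have hkey := key_ineq h1 h2 hrρ θ t hn
    rw [← hz, ← ha] at hkey
    have hk2 : (ρ - r)^(n+1) * ‖circleMap 0 ρ t - a‖^2
        ≤ (ρ - ra)^2 * ‖circleMap 0 ρ t - z‖^(n+1) := by
      refine hkey.trans (le_of_eq ?_)
      rw [mul_assoc, ← pow_add]
      congr 2
      omega
    have hmain : ρ / ‖circleMap 0 ρ t - z‖^(n+1) ≤ c₀ * K t := by
      have hKt : c₀ * K t = ρ * (ρ - ra) * (ρ^2 - ra^2)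
          / ((ρ - r)^(n+1) * (ρ + ra) * ‖circleMap 0 ρ t - a‖^2) := by
        rw [hc₀, hK_def]
        simp only [hna]
        rw [div_mul_div_comm]
      rw [hKt, div_le_div_iff₀ (pow_pos hzpos _) (by positivity)]
      calc ρ * ((ρ-r)^(n+1) * (ρ+ra) * ‖circleMap 0 ρ t - a‖^2)
          = (ρ * (ρ+ra)) * ((ρ-r)^(n+1) * ‖circleMap 0 ρ t - a‖^2) := by ring
        _ ≤ (ρ * (ρ+ra)) * ((ρ-ra)^2 * ‖circleMap 0 ρ t - z‖^(n+1)) :=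
            mul_le_mul_of_nonneg_left hk2 (by positivity)
        _ = ρ * (ρ-ra) * (ρ^2-ra^2) * ‖circleMap 0 ρ t - z‖^(n+1) := by ring
    calc ‖(u t : ℂ) * (circleMap 0 ρ t / (circleMap 0 ρ t - z)^(n+1))‖
        = |u t| * (ρ / ‖circleMap 0 ρ t - z‖^(n+1)) := by
          rw [norm_mul, norm_div, norm_pow, circleMap_norm hρ0, Complex.norm_real,
            Real.norm_eq_abs]
      _ = (-u t) * (ρ / ‖circleMap 0 ρ t - z‖^(n+1)) := by rw [abs_of_nonpos (hu0 t)]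
      _ ≤ (-u t) * (c₀ * K t) :=
          mul_le_mul_of_nonneg_left hmain (by linarith [hu0 t])
  -- derivative representation
  have hiter := Fk_iter hρ0 hu n z hzb
  have hEq1 : iteratedDeriv n (fun w => ∫ t in (0:ℝ)..2*π,
      (u t:ℂ) * (circleMap 0 ρ t / (circleMap 0 ρ t - w))) z
      = ((π:ℝ):ℂ) * iteratedDeriv n f z := by
    have hev : (fun w => ∫ t in (0:ℝ)..2*π, (u t:ℂ) * (circleMap 0 ρ t / (circleMap 0 ρ t - w)))
        =ᶠ[nhds z] (fun w => ((π:ℝ):ℂ) * f w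
          + (((π:ℝ):ℂ) * (starRingEnd ℂ) (f 0) - ((2*π:ℝ):ℂ) * M)) := by
      filter_upwards [isOpen_ball.eventually_mem hzb] with x hx
      exact I1 x hx
    rw [Filter.EventuallyEq.iteratedDeriv_eq n hev, iter_cmul_add _ _ _ hn]
  have hrep : ((π:ℝ):ℂ) * iteratedDeriv n f z = (n.factorial : ℂ)
      * ∫ t in (0:ℝ)..2*π, (u t:ℂ) * (circleMap 0 ρ t / (circleMap 0 ρ t - z)^(n+1)) := by
    rw [← hEq1, hiter]
  -- norm bound
  have hgint : IntervalIntegrable (fun t => (-u t) * (c₀ * K t)) MeasureTheory.volume 0 (2*π) :=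
    ((hu.neg).mul (continuous_const.mul hKc)).intervalIntegrable _ _
  have hbd := intervalIntegral.norm_integral_le_abs_of_norm_le (μ := MeasureTheory.volume)
    (f := fun t => (u t:ℂ) * (circleMap 0 ρ t / (circleMap 0 ρ t - z)^(n+1)))
    (MeasureTheory.ae_of_all _ fun t => hpt t) hgint
  have hBa : (f a).re ≤ M :=
    hM.1 ⟨a, mem_ball_zero_iff.2 (by rw [hna]; linarith), rfl⟩
  have hIg : (∫ t in (0:ℝ)..2*π, (-u t) * (c₀ * K t)) = c₀ * (2*π*(M - (f a).re)) := by
    calc (∫ t in (0:ℝ)..2*π, (-u t) * (c₀ * K t))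
        = ∫ t in (0:ℝ)..2*π, c₀ * (-(u t * K t)) :=
          intervalIntegral.integral_congr fun t _ => by ring
      _ = c₀ * -∫ t in (0:ℝ)..2*π, u t * K t := by
          rw [intervalIntegral.integral_const_mul, intervalIntegral.integral_neg]
      _ = c₀ * (2*π*(M - (f a).re)) := by rw [I2]; ring
  have hπ : 0 < π := Real.pi_pos
  have hfin : π * ‖iteratedDeriv n f z‖
      ≤ (n.factorial : ℝ) * (c₀ * (2*π*(M - (f a).re))) := by
    have hl : π * ‖iteratedDeriv n f z‖ = ‖((π:ℝ):ℂ) * iteratedDeriv n f z‖ := by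
      rw [norm_mul, Complex.norm_real, Real.norm_eq_abs, _root_.abs_of_pos hπ]
    rw [hl, hrep, norm_mul, Complex.norm_natCast]
    refine mul_le_mul_of_nonneg_left ?_ (by positivity)
    calc ‖∫ t in (0:ℝ)..2*π, (u t:ℂ) * (circleMap 0 ρ t / (circleMap 0 ρ t - z)^(n+1))‖
        ≤ |∫ t in (0:ℝ)..2*π, (-u t) * (c₀ * K t)| := hbd
      _ = c₀ * (2*π*(M - (f a).re)) := by
          rw [hIg]
          exact _root_.abs_of_nonneg (mul_nonneg hc₀0 (by nlinarith))
  rw [← mul_le_mul_iff_right₀ hπ]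
  calc π * ‖iteratedDeriv n f z‖ ≤ (n.factorial : ℝ) * (c₀ * (2*π*(M - (f a).re))) := hfin
    _ = π * (2 * n.factorial * ρ * (ρ - ra) / ((ρ - r) ^ (n + 1) * (ρ + ra)) * (M - (f a).re)) := by
        rw [hc₀]; ring

theorem stmt1 (R r ra θ M : ℝ) (f : ℂ → ℂ)
    (hR : 0 < R) (h1 : 0 ≤ ra) (h2 : ra ≤ r) (h3 : r < R)
    (hf : DifferentiableOn ℂ f (ball 0 R))
    (hM : IsLUB ((fun w => (f w).re) '' ball (0:ℂ) R) M)
    (z a : ℂ) (hz : z = (r : ℂ) * exp (θ * I)) (ha : a = (ra : ℂ) * exp (θ * I))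
    (n : ℕ) (hn : 1 ≤ n) :
    ‖iteratedDeriv n f z‖ ≤
      2 * n.factorial * R * (R - ra) / ((R - r) ^ (n + 1) * (R + ra)) * (M - (f a).re) := by
  have hkey : ∀ ρ ∈ Set.Ioo r R, ‖iteratedDeriv n f z‖
      ≤ 2 * n.factorial * ρ * (ρ - ra) / ((ρ - r) ^ (n + 1) * (ρ + ra)) * (M - (f a).re) :=
    fun ρ hρ => main_est R r ra θ M f h1 h2 h3 hf hM hz ha hn hρ.1 hρ.2
  have hRr : 0 < R - r := by linarith
  have hRra : 0 < R + ra := by linarith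
  have hne : ((R - r) ^ (n + 1) * (R + ra)) ≠ 0 := ne_of_gt (mul_pos (pow_pos hRr _) hRra)
  have hca : ContinuousAt (fun ρ : ℝ => 2 * n.factorial * ρ * (ρ - ra)
      / ((ρ - r) ^ (n + 1) * (ρ + ra)) * (M - (f a).re)) R := by
    apply ContinuousAt.mul _ continuousAt_const
    exact ContinuousAt.div (by fun_prop) (by fun_prop) hne
  refine ge_of_tendsto (hca.tendsto.mono_left (nhdsWithin_le_nhds (s := Set.Iio R))) ?_
  filter_upwards [Ioo_mem_nhdsLT_of_mem (Set.mem_Ioc.2 ⟨h3, le_refl R⟩)] with ρ hρ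
  exact hkey ρ hρ
end

section
/- Let f(z) = Σ_{n≥0} c_n z^n be holomorphic on D_R with sup_{|ζ|<R} |f(ζ)| = M < ∞. Then for every q > 0, every integer m ≥ 1, and every z with |z| = r < R, (Σ_{n=m}^∞ |c_n z^n|^q)^{1/q} ≤ (2 r^m) / (R^{m-1} (R^q - r^q)^{1/q}) · (M - |c_0|). -/
set_option maxHeartbeats 400000
open Complex Metric Real MeasureTheory intervalIntegral

lemma auxFourierZero (s : ℤ) (hs : s ≠ 0) :
    ∫ t in (0:ℝ)..(2*π), Complex.exp (s * t * Complex.I) = 0 := by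
  have hc : (s : ℂ) * Complex.I ≠ 0 := by
    simp [Complex.I_ne_zero, hs]
  have : ∀ t : ℝ, Complex.exp (s * t * Complex.I) = Complex.exp ((s * Complex.I) * t) := by
    intro t; ring_nf
  simp_rw [this]
  rw [integral_exp_mul_complex hc]
  have h1 : (s : ℂ) * Complex.I * (2*π:ℝ) = s * (2 * π * Complex.I) := by push_cast; ring
  rw [h1, Complex.exp_int_mul_two_pi_mul_I]
  simp

lemma auxTermInt (a : ℂ) (N : ℤ) :
    ∫ t in (0:ℝ)..(2*π), a * Complex.exp (N * t * Complex.I) =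
      if N = 0 then (2*π : ℝ) * a else 0 := by
  rw [intervalIntegral.integral_const_mul]
  by_cases hN : N = 0
  · simp [hN, mul_comm]
  · rw [auxFourierZero N hN]; simp [hN]

lemma auxRep (R ρ : ℝ) (f : ℂ → ℂ) (c : ℕ → ℂ) (hρ0 : 0 ≤ ρ) (hρ : ρ < R)
    (hsum : ∀ w ∈ ball (0:ℂ) R, HasSum (fun n : ℕ => c n * w ^ n) (f w))
    (hS : Summable (fun k : ℕ => ‖c k‖ * ρ^k))
    (hcont : ContinuousOn f (ball 0 R)) (s : ℤ) :
    HasSum (fun k : ℕ => if (k:ℤ) + s = 0 then (2*π : ℝ) * (c k * (ρ:ℂ)^k) else 0)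
      (∫ t in (0:ℝ)..(2*π), f (ρ * Complex.exp (t*Complex.I)) * Complex.exp (s*t*Complex.I)) := by
  have hπ : (0:ℝ) ≤ 2*π := by positivity
  set F : ℕ → ℝ → ℂ := fun k t =>
      (c k * (ρ:ℂ)^k) * Complex.exp (((((k:ℤ)+s : ℤ)) : ℂ) * t * Complex.I) with hF
  have hmem : ∀ t : ℝ, (ρ:ℂ) * Complex.exp (t*Complex.I) ∈ ball (0:ℂ) R := by
    intro t
    simp only [mem_ball, dist_zero_right, norm_mul, Complex.norm_exp_ofReal_mul_I,
      mul_one, Complex.norm_real, Real.norm_of_nonneg hρ0]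
    exact hρ
  -- continuity of each F k and of the total integrand
  have hFcont : ∀ k, Continuous (F k) := by
    intro k
    apply continuous_const.mul
    apply Complex.continuous_exp.comp
    continuity
  have hgcont : Continuous (fun t : ℝ => f ((ρ:ℂ) * Complex.exp (t*Complex.I)) *
      Complex.exp (s*t*Complex.I)) := by
    apply Continuous.mul
    · exact hcont.comp_continuous (by continuity) hmem
    · apply Complex.continuous_exp.comp; continuity
  -- pointwise sum
  have hpt : ∀ t : ℝ, HasSum (fun k => F k t)
      (f ((ρ:ℂ) * Complex.exp (t*Complex.I)) * Complex.exp (s*t*Complex.I)) := by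
    intro t
    have h1 := (hsum _ (hmem t)).mul_right (Complex.exp (s*t*Complex.I))
    suffices hfun : (fun k => F k t) = fun k => c k * ((ρ:ℂ) * Complex.exp (t*Complex.I)) ^ k *
        Complex.exp (s*t*Complex.I) by
      rw [hfun]; exact h1
    funext k
    rw [hF]
    simp only
    rw [mul_pow, ← Complex.exp_nat_mul, ← mul_assoc, mul_assoc _ _ (Complex.exp (s*t*Complex.I)),
      ← Complex.exp_add]
    congr 2
    push_cast; ring
  -- integrability and norm integrals
  have hFint : ∀ k, IntegrableOn (F k) (Set.Ioc 0 (2*π)) volume :=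
    fun k => (hFcont k).integrableOn_Ioc
  have hnorm : ∀ k, (∫ t in Set.Ioc (0:ℝ) (2*π), ‖F k t‖) = ‖c k‖ * ρ^k * (2*π) := by
    intro k
    have : ∀ t : ℝ, ‖F k t‖ = ‖c k‖ * ρ^k := by
      intro t
      rw [hF]
      simp only [norm_mul]
      have h2 : (((((k:ℤ)+s : ℤ)) : ℂ)) * t * Complex.I =
          ((((((k:ℤ)+s : ℤ)) : ℝ) * t : ℝ) : ℂ) * Complex.I := by
        push_cast; ring
      rw [h2, Complex.norm_exp_ofReal_mul_I, mul_one, norm_pow, Complex.norm_real,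
        Real.norm_of_nonneg hρ0]
    simp_rw [this]
    rw [MeasureTheory.setIntegral_const, Measure.real, Real.volume_Ioc]
    have h5 : (2*π - 0 : ℝ) = 2*π := by ring
    rw [h5, ENNReal.toReal_ofReal (by positivity : (0:ℝ) ≤ 2*π)]
    simp only [smul_eq_mul]
    ring
  have hsummable : Summable (fun k => ∫ t in Set.Ioc (0:ℝ) (2*π), ‖F k t‖) := by
    simp_rw [hnorm]
    exact hS.mul_right _
  have hswap : HasSum (fun k => ∫ t in Set.Ioc (0:ℝ) (2*π), F k t)
      (∫ t in Set.Ioc (0:ℝ) (2*π), ∑' k, F k t) :=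
    MeasureTheory.hasSum_integral_of_summable_integral_norm hFint hsummable
  have h6 : (∫ t in Set.Ioc (0:ℝ) (2*π), (∑' k, F k t)) =
      ∫ t in (0:ℝ)..(2*π), f ((ρ:ℂ) * Complex.exp (t*Complex.I)) *
        Complex.exp (s*t*Complex.I) := by
    rw [intervalIntegral.integral_of_le hπ]
    exact MeasureTheory.integral_congr_ae (Filter.Eventually.of_forall fun t => (hpt t).tsum_eq)
  have h7 : ∀ k, (∫ t in Set.Ioc (0:ℝ) (2*π), F k t) =
      if (k:ℤ)+s = 0 then (2*π:ℝ)*(c k * (ρ:ℂ)^k) else 0 := by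
    intro k
    rw [← intervalIntegral.integral_of_le hπ]
    exact auxTermInt (c k * (ρ:ℂ)^k) ((k:ℤ)+s)
  have h8 : (fun k : ℕ => if (k:ℤ)+s = 0 then (2*π:ℝ)*(c k * (ρ:ℂ)^k) else 0)
      = fun k => ∫ t in Set.Ioc (0:ℝ) (2*π), F k t := funext fun k => (h7 k).symm
  rw [← h6, h8]
  exact hswap

lemma auxSummable (R ρ : ℝ) (f : ℂ → ℂ) (c : ℕ → ℂ) (hρ0 : 0 ≤ ρ) (hρ : ρ < R)
    (hsum : ∀ w ∈ ball (0:ℂ) R, HasSum (fun n : ℕ => c n * w ^ n) (f w)) (hR : 0 < R) :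
    Summable (fun k : ℕ => ‖c k‖ * ρ^k) := by
  set ρ' : ℝ := (ρ + R)/2 with hρ'def
  have hρ'0 : 0 < ρ' := by rw [hρ'def]; linarith
  have h1 : ρ < ρ' := by rw [hρ'def]; linarith
  have h2 : ρ' < R := by rw [hρ'def]; linarith
  have hw : ((ρ' : ℝ) : ℂ) ∈ ball (0:ℂ) R := by
    simp only [mem_ball, dist_zero_right, Complex.norm_real, Real.norm_of_nonneg hρ'0.le]
    exact h2
  have hS := (hsum _ hw).summable
  have ht : Filter.Tendsto (fun k => ‖c k * ((ρ':ℝ):ℂ)^k‖) Filter.atTop (nhds 0) := by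
    rw [← tendsto_zero_iff_norm_tendsto_zero]
    exact hS.tendsto_atTop_zero
  obtain ⟨C, hC⟩ := ht.bddAbove_range
  have hC' : ∀ k : ℕ, ‖c k‖ * ρ'^k ≤ C := by
    intro k
    have := hC (Set.mem_range_self k)
    simpa [norm_mul, norm_pow, Complex.norm_real, Real.norm_of_nonneg hρ'0.le,
      abs_of_pos hρ'0] using this
  have hgeo : Summable (fun k : ℕ => C * (ρ/ρ')^k) := by
    apply Summable.mul_left
    apply summable_geometric_of_lt_one (by positivity)
    rw [div_lt_one hρ'0]; exact h1
  apply Summable.of_nonneg_of_le (fun k => by positivity) (fun k => ?_) hgeo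
  have hkey : ‖c k‖ * ρ^k = (‖c k‖ * ρ'^k) * (ρ/ρ')^k := by
    have h4 : (ρ/ρ')^k * ρ'^k = ρ^k := by
      rw [div_pow]; exact div_mul_cancel₀ _ (pow_ne_zero k hρ'0.ne')
    rw [mul_assoc, mul_comm (ρ'^k) ((ρ/ρ')^k), h4]
  rw [hkey]
  exact mul_le_mul_of_nonneg_right (hC' k) (by positivity)

lemma auxCoeff (R M : ℝ) (f : ℂ → ℂ) (c : ℕ → ℂ) (hR : 0 < R)
    (hcont : ContinuousOn f (ball 0 R))
    (hsum : ∀ w ∈ ball (0:ℂ) R, HasSum (fun n : ℕ => c n * w ^ n) (f w))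
    (hfM : ∀ w ∈ ball (0:ℂ) R, ‖f w‖ ≤ M)
    (n : ℕ) (hn : 1 ≤ n) {ρ : ℝ} (hρ0 : 0 ≤ ρ) (hρ : ρ < R) :
    ‖c n‖ * ρ^n ≤ 2 * (M - ‖c 0‖) := by
  have hπ : (0:ℝ) ≤ 2*π := by positivity
  have hπ' : (0:ℝ) < 2*π := by positivity
  have hS := auxSummable R ρ f c hρ0 hρ hsum hR
  have hmem : ∀ t : ℝ, (ρ:ℂ) * Complex.exp (t*Complex.I) ∈ ball (0:ℂ) R := by
    intro t
    simp only [mem_ball, dist_zero_right, norm_mul, Complex.norm_exp_ofReal_mul_I,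
      mul_one, Complex.norm_real, Real.norm_of_nonneg hρ0]
    exact hρ
  have hgc : Continuous (fun t : ℝ => f ((ρ:ℂ) * Complex.exp (t*Complex.I))) :=
    hcont.comp_continuous (by continuity) hmem
  have hgM : ∀ t : ℝ, ‖f ((ρ:ℂ) * Complex.exp (t*Complex.I))‖ ≤ M := fun t => hfM _ (hmem t)
  -- the three integral identities
  have hI1 : (∫ t in (0:ℝ)..(2*π), f ((ρ:ℂ) * Complex.exp (t*Complex.I)) * Complex.exp (((-(n:ℤ) : ℤ) : ℂ) * t * Complex.I))
      = (2*π:ℝ) * (c n * (ρ:ℂ)^n) := by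
    have h := auxRep R ρ f c hρ0 hρ hsum hS hcont (-(n:ℤ))
    have he : (fun k : ℕ => if (k:ℤ) + -(n:ℤ) = 0 then (2*π:ℝ) * (c k * (ρ:ℂ)^k) else 0)
        = fun k : ℕ => if k = n then (2*π:ℝ) * (c n * (ρ:ℂ)^n) else 0 := by
      funext k
      by_cases hk : k = n
      · subst hk; simp
      · rw [if_neg hk, if_neg (by omega)]
    rw [he] at h
    exact h.unique (hasSum_ite_eq n _)
  have hI2 : (∫ t in (0:ℝ)..(2*π), f ((ρ:ℂ) * Complex.exp (t*Complex.I)) * Complex.exp ((((n:ℤ) : ℤ) : ℂ) * t * Complex.I))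
      = 0 := by
    have h := auxRep R ρ f c hρ0 hρ hsum hS hcont (n:ℤ)
    have he : (fun k : ℕ => if (k:ℤ) + (n:ℤ) = 0 then (2*π:ℝ) * (c k * (ρ:ℂ)^k) else 0)
        = fun _ : ℕ => (0:ℂ) := by
      funext k
      rw [if_neg (by omega)]
    rw [he] at h
    exact h.unique hasSum_zero
  have hI0 : (∫ t in (0:ℝ)..(2*π), f ((ρ:ℂ) * Complex.exp (t*Complex.I))) = (2*π:ℝ) * c 0 := by
    have h := auxRep R ρ f c hρ0 hρ hsum hS hcont 0
    have he : (fun k : ℕ => if (k:ℤ) + (0:ℤ) = 0 then (2*π:ℝ) * (c k * (ρ:ℂ)^k) else 0)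
        = fun k : ℕ => if k = 0 then (2*π:ℝ) * (c 0 * (ρ:ℂ)^0) else 0 := by
      funext k
      by_cases hk : k = 0
      · subst hk; simp
      · rw [if_neg (by omega), if_neg hk]
    rw [he] at h
    have h2 := h.unique (hasSum_ite_eq 0 _)
    have h3 : (∫ t in (0:ℝ)..(2*π), f ((ρ:ℂ) * Complex.exp (t*Complex.I)) * Complex.exp (((0:ℤ) : ℂ) * t * Complex.I))
        = ∫ t in (0:ℝ)..(2*π), f ((ρ:ℂ) * Complex.exp (t*Complex.I)) := by
      congr 1; funext t; simp
    rw [h3] at h2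
    rw [h2]
    simp
  -- choose unimodular lam with conj lam * c 0 = ‖c 0‖
  obtain ⟨lam, hlam1, hlam2⟩ : ∃ lam : ℂ, ‖lam‖ = 1 ∧
      (starRingEnd ℂ) lam * c 0 = ((‖c 0‖ : ℝ) : ℂ) := by
    by_cases h0 : c 0 = 0
    · exact ⟨1, by simp, by simp [h0]⟩
    · refine ⟨c 0 / (‖c 0‖ : ℝ), ?_, ?_⟩
      · rw [norm_div, Complex.norm_real, norm_norm, div_self (norm_ne_zero_iff.2 h0)]
      · have hne : ((‖c 0‖ : ℝ) : ℂ) ≠ 0 := by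
          simpa using norm_ne_zero_iff.2 h0
        rw [map_div₀, Complex.conj_ofReal, div_mul_eq_mul_div, mul_comm, Complex.mul_conj,
          Complex.normSq_eq_norm_sq]
        rw [div_eq_iff hne]
        push_cast
        ring
  have hlamnorm : ‖(starRingEnd ℂ) lam‖ = 1 := by
    rw [RCLike.norm_conj]; exact hlam1
  have hec : Continuous (fun t : ℝ => Complex.exp (((-(n:ℤ) : ℤ) : ℂ) * t * Complex.I)) := by
    apply Complex.continuous_exp.comp; continuity
  have hec' : Continuous (fun t : ℝ => Complex.exp ((((n:ℤ) : ℤ) : ℂ) * t * Complex.I)) := by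
    apply Complex.continuous_exp.comp; continuity
  -- conjugate integral vanishes
  have hJ : (∫ t in (0:ℝ)..(2*π), (starRingEnd ℂ) (f ((ρ:ℂ) * Complex.exp (t*Complex.I))) *
      Complex.exp (((-(n:ℤ) : ℤ) : ℂ) * t * Complex.I)) = 0 := by
    have hconj : ∀ t : ℝ, (starRingEnd ℂ) (f ((ρ:ℂ) * Complex.exp (t*Complex.I)) *
        Complex.exp ((((n:ℤ) : ℤ) : ℂ) * t * Complex.I)) =
        (starRingEnd ℂ) (f ((ρ:ℂ) * Complex.exp (t*Complex.I))) *
        Complex.exp (((-(n:ℤ) : ℤ) : ℂ) * t * Complex.I) := by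
      intro t
      rw [map_mul, ← Complex.exp_conj]
      congr 2
      simp only [map_mul, Complex.conj_I, Complex.conj_ofReal, map_intCast]
      push_cast
      ring
    calc (∫ t in (0:ℝ)..(2*π), (starRingEnd ℂ) (f ((ρ:ℂ) * Complex.exp (t*Complex.I))) *
          Complex.exp (((-(n:ℤ) : ℤ) : ℂ) * t * Complex.I))
        = ∫ t in (0:ℝ)..(2*π), (starRingEnd ℂ) (f ((ρ:ℂ) * Complex.exp (t*Complex.I)) *
            Complex.exp ((((n:ℤ) : ℤ) : ℂ) * t * Complex.I)) := by
          simp only [hconj]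
      _ = (starRingEnd ℂ) (∫ t in (0:ℝ)..(2*π), f ((ρ:ℂ) * Complex.exp (t*Complex.I)) *
            Complex.exp ((((n:ℤ) : ℤ) : ℂ) * t * Complex.I)) := by
          rw [intervalIntegral.integral_of_le hπ, intervalIntegral.integral_of_le hπ]
          exact integral_conj
      _ = 0 := by rw [hI2]; simp
  -- integrability facts
  have hintM : IntervalIntegrable (fun t : ℝ =>
      (M:ℂ) * Complex.exp (((-(n:ℤ) : ℤ) : ℂ) * t * Complex.I)) MeasureTheory.volume 0 (2*π) :=
    (continuous_const.mul hec).intervalIntegrable _ _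
  have hintG : IntervalIntegrable (fun t : ℝ =>
      (starRingEnd ℂ) lam * f ((ρ:ℂ) * Complex.exp (t*Complex.I)) *
        Complex.exp (((-(n:ℤ) : ℤ) : ℂ) * t * Complex.I)) MeasureTheory.volume 0 (2*π) :=
    ((continuous_const.mul hgc).mul hec).intervalIntegrable _ _
  have hintG' : IntervalIntegrable (fun t : ℝ =>
      lam * (starRingEnd ℂ) (f ((ρ:ℂ) * Complex.exp (t*Complex.I))) *
        Complex.exp (((-(n:ℤ) : ℤ) : ℂ) * t * Complex.I)) MeasureTheory.volume 0 (2*π) :=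
    ((continuous_const.mul (Complex.continuous_conj.comp hgc)).mul hec).intervalIntegrable _ _
  have hMint : (∫ t in (0:ℝ)..(2*π),
      (M:ℂ) * Complex.exp (((-(n:ℤ) : ℤ) : ℂ) * t * Complex.I)) = 0 := by
    rw [auxTermInt (M:ℂ) (-(n:ℤ)), if_neg (by omega)]
  -- the key identity
  have hK1 : (∫ t in (0:ℝ)..(2*π),
      ((2 * (M - ((starRingEnd ℂ) lam * f ((ρ:ℂ) * Complex.exp (t*Complex.I))).re) : ℝ) : ℂ) *
        Complex.exp (((-(n:ℤ) : ℤ) : ℂ) * t * Complex.I))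
      = -((starRingEnd ℂ) lam * ((2*π:ℝ) * (c n * (ρ:ℂ)^n))) := by
    have hsplit : ∀ t : ℝ,
        ((2 * (M - ((starRingEnd ℂ) lam * f ((ρ:ℂ) * Complex.exp (t*Complex.I))).re) : ℝ) : ℂ) *
          Complex.exp (((-(n:ℤ) : ℤ) : ℂ) * t * Complex.I) =
        ((M:ℂ) - (starRingEnd ℂ) lam * f ((ρ:ℂ) * Complex.exp (t*Complex.I))) *
          Complex.exp (((-(n:ℤ) : ℤ) : ℂ) * t * Complex.I) +
        ((M:ℂ) - lam * (starRingEnd ℂ) (f ((ρ:ℂ) * Complex.exp (t*Complex.I)))) *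
          Complex.exp (((-(n:ℤ) : ℤ) : ℂ) * t * Complex.I) := by
      intro t
      rw [← add_mul]
      congr 1
      have hcc : ((M:ℂ) - (starRingEnd ℂ) lam * f ((ρ:ℂ) * Complex.exp (t*Complex.I))) +
          ((M:ℂ) - lam * (starRingEnd ℂ) (f ((ρ:ℂ) * Complex.exp (t*Complex.I)))) =
          2*(M:ℂ) - (((starRingEnd ℂ) lam * f ((ρ:ℂ) * Complex.exp (t*Complex.I))) +
            (starRingEnd ℂ) ((starRingEnd ℂ) lam * f ((ρ:ℂ) * Complex.exp (t*Complex.I)))) := by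
        rw [map_mul, Complex.conj_conj]
        ring
      rw [hcc, Complex.add_conj]
      push_cast
      ring
    simp only [hsplit]
    have hA : (∫ t in (0:ℝ)..(2*π),
        ((M:ℂ) - (starRingEnd ℂ) lam * f ((ρ:ℂ) * Complex.exp (t*Complex.I))) *
          Complex.exp (((-(n:ℤ) : ℤ) : ℂ) * t * Complex.I))
        = -((starRingEnd ℂ) lam * ((2*π:ℝ) * (c n * (ρ:ℂ)^n))) := by
      simp only [sub_mul]
      rw [intervalIntegral.integral_sub hintM hintG, hMint]
      have hassoc : (fun t : ℝ => (starRingEnd ℂ) lam * f ((ρ:ℂ) * Complex.exp (t*Complex.I)) *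
          Complex.exp (((-(n:ℤ) : ℤ) : ℂ) * t * Complex.I)) =
          fun t : ℝ => (starRingEnd ℂ) lam * (f ((ρ:ℂ) * Complex.exp (t*Complex.I)) *
          Complex.exp (((-(n:ℤ) : ℤ) : ℂ) * t * Complex.I)) := funext fun t => mul_assoc _ _ _
      rw [hassoc, intervalIntegral.integral_const_mul, hI1]
      ring
    have hB : (∫ t in (0:ℝ)..(2*π),
        ((M:ℂ) - lam * (starRingEnd ℂ) (f ((ρ:ℂ) * Complex.exp (t*Complex.I)))) *
          Complex.exp (((-(n:ℤ) : ℤ) : ℂ) * t * Complex.I)) = 0 := by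
      simp only [sub_mul]
      rw [intervalIntegral.integral_sub hintM hintG', hMint]
      have hassoc : (fun t : ℝ => lam * (starRingEnd ℂ) (f ((ρ:ℂ) * Complex.exp (t*Complex.I))) *
          Complex.exp (((-(n:ℤ) : ℤ) : ℂ) * t * Complex.I)) =
          fun t : ℝ => lam * ((starRingEnd ℂ) (f ((ρ:ℂ) * Complex.exp (t*Complex.I))) *
          Complex.exp (((-(n:ℤ) : ℤ) : ℂ) * t * Complex.I)) := funext fun t => mul_assoc _ _ _
      rw [hassoc, intervalIntegral.integral_const_mul, hJ]
      ring
    have hint1 : IntervalIntegrable (fun t : ℝ =>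
        ((M:ℂ) - (starRingEnd ℂ) lam * f ((ρ:ℂ) * Complex.exp (t*Complex.I))) *
          Complex.exp (((-(n:ℤ) : ℤ) : ℂ) * t * Complex.I)) MeasureTheory.volume 0 (2*π) :=
      ((continuous_const.sub (continuous_const.mul hgc)).mul hec).intervalIntegrable _ _
    have hint2 : IntervalIntegrable (fun t : ℝ =>
        ((M:ℂ) - lam * (starRingEnd ℂ) (f ((ρ:ℂ) * Complex.exp (t*Complex.I)))) *
          Complex.exp (((-(n:ℤ) : ℤ) : ℂ) * t * Complex.I)) MeasureTheory.volume 0 (2*π) :=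
      ((continuous_const.sub (continuous_const.mul (Complex.continuous_conj.comp hgc))).mul
        hec).intervalIntegrable _ _
    rw [intervalIntegral.integral_add hint1 hint2, hA, hB, add_zero]
  -- integral of the nonnegative real part
  have hK2 : (∫ t in (0:ℝ)..(2*π),
      (M - ((starRingEnd ℂ) lam * f ((ρ:ℂ) * Complex.exp (t*Complex.I))).re))
      = 2*π*M - 2*π*‖c 0‖ := by
    have hrc : Continuous (fun t : ℝ =>
        ((starRingEnd ℂ) lam * f ((ρ:ℂ) * Complex.exp (t*Complex.I))).re) :=
      Complex.continuous_re.comp (continuous_const.mul hgc)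
    rw [intervalIntegral.integral_sub intervalIntegrable_const (hrc.intervalIntegrable _ _),
      intervalIntegral.integral_const]
    have hre : (∫ t in (0:ℝ)..(2*π),
        ((starRingEnd ℂ) lam * f ((ρ:ℂ) * Complex.exp (t*Complex.I))).re) = 2*π*‖c 0‖ := by
      rw [intervalIntegral.integral_of_le hπ]
      simp only [← RCLike.re_to_complex]
      rw [integral_re (f := fun t : ℝ => (starRingEnd ℂ) lam * f ((ρ:ℂ) * Complex.exp (t*Complex.I)))
        ((continuous_const.mul hgc).integrableOn_Ioc)]
      have h9 : (∫ t in Set.Ioc (0:ℝ) (2*π),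
          (starRingEnd ℂ) lam * f ((ρ:ℂ) * Complex.exp (t*Complex.I)))
          = (starRingEnd ℂ) lam * ((2*π:ℝ) * c 0) := by
        rw [MeasureTheory.integral_const_mul, ← intervalIntegral.integral_of_le hπ, hI0]
      rw [h9, ← mul_assoc, mul_comm ((starRingEnd ℂ) lam) (((2*π:ℝ) : ℂ)), mul_assoc, hlam2]
      simp [RCLike.re_to_complex]
    rw [hre]
    simp only [smul_eq_mul]
    ring
  have hpos : ∀ t : ℝ,
      0 ≤ M - ((starRingEnd ℂ) lam * f ((ρ:ℂ) * Complex.exp (t*Complex.I))).re := by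
    intro t
    have h1 : ((starRingEnd ℂ) lam * f ((ρ:ℂ) * Complex.exp (t*Complex.I))).re ≤
        ‖(starRingEnd ℂ) lam * f ((ρ:ℂ) * Complex.exp (t*Complex.I))‖ := by
      exact Complex.re_le_norm _
    rw [norm_mul, hlamnorm, one_mul] at h1
    linarith [hgM t]
  have henorm : ∀ t : ℝ, ‖Complex.exp (((-(n:ℤ) : ℤ) : ℂ) * t * Complex.I)‖ = 1 := by
    intro t
    have h2 : (((-(n:ℤ) : ℤ) : ℂ)) * t * Complex.I =
        ((((-(n:ℤ) : ℤ) : ℝ) * t : ℝ) : ℂ) * Complex.I := by push_cast; ring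
    rw [h2, Complex.norm_exp_ofReal_mul_I]
  have hbound : 2*π * (‖c n‖ * ρ^n) ≤ 2*(2*π*M - 2*π*‖c 0‖) := by
    have hL : ‖-((starRingEnd ℂ) lam * ((2*π:ℝ) * (c n * (ρ:ℂ)^n)))‖ =
        2*π * (‖c n‖ * ρ^n) := by
      rw [norm_neg, norm_mul, hlamnorm, one_mul, norm_mul, norm_mul, norm_pow,
        Complex.norm_real, Complex.norm_real, Real.norm_of_nonneg hπ,
        Real.norm_of_nonneg hρ0]
    have hInt := intervalIntegral.norm_integral_le_integral_norm
      (f := fun t : ℝ =>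
        ((2 * (M - ((starRingEnd ℂ) lam * f ((ρ:ℂ) * Complex.exp (t*Complex.I))).re) : ℝ) : ℂ) *
          Complex.exp (((-(n:ℤ) : ℤ) : ℂ) * t * Complex.I)) (μ := MeasureTheory.volume) hπ
    rw [hK1, hL] at hInt
    have hnormint : (∫ t in (0:ℝ)..(2*π),
        ‖((2 * (M - ((starRingEnd ℂ) lam * f ((ρ:ℂ) * Complex.exp (t*Complex.I))).re) : ℝ) : ℂ) *
          Complex.exp (((-(n:ℤ) : ℤ) : ℂ) * t * Complex.I)‖)
        = ∫ t in (0:ℝ)..(2*π),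
          2 * (M - ((starRingEnd ℂ) lam * f ((ρ:ℂ) * Complex.exp (t*Complex.I))).re) := by
      apply intervalIntegral.integral_congr
      intro t _
      dsimp only
      rw [norm_mul, henorm t, mul_one, Complex.norm_real, Real.norm_of_nonneg
        (by linarith [hpos t])]
    rw [hnormint] at hInt
    rw [intervalIntegral.integral_const_mul, hK2] at hInt
    linarith
  nlinarith [hπ', Real.pi_pos]

lemma auxCoeffLim (R M : ℝ) (f : ℂ → ℂ) (c : ℕ → ℂ) (hR : 0 < R)
    (hcont : ContinuousOn f (ball 0 R))
    (hsum : ∀ w ∈ ball (0:ℂ) R, HasSum (fun n : ℕ => c n * w ^ n) (f w))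
    (hfM : ∀ w ∈ ball (0:ℂ) R, ‖f w‖ ≤ M)
    (n : ℕ) (hn : 1 ≤ n) :
    ‖c n‖ * R^n ≤ 2 * (M - ‖c 0‖) := by
  have hten : Filter.Tendsto (fun ρ : ℝ => ‖c n‖ * ρ^n) (nhdsWithin R (Set.Iio R))
      (nhds (‖c n‖ * R^n)) := by
    apply Filter.Tendsto.mono_left _ nhdsWithin_le_nhds
    exact (continuous_const.mul (continuous_pow n)).tendsto R
  have hev : ∀ᶠ ρ in nhdsWithin R (Set.Iio R), ‖c n‖ * ρ^n ≤ 2 * (M - ‖c 0‖) := by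
    filter_upwards [self_mem_nhdsWithin,
      (eventually_gt_nhds hR).filter_mono nhdsWithin_le_nhds] with ρ h1 h2
    exact auxCoeff R M f c hR hcont hsum hfM n hn h2.le h1
  exact le_of_tendsto hten hev

theorem stmt6 (R r q M : ℝ) (m : ℕ) (f : ℂ → ℂ) (c : ℕ → ℂ)
    (hR : 0 < R) (hq : 0 < q) (hm : 1 ≤ m) (hr : 0 ≤ r) (h3 : r < R)
    (hf : DifferentiableOn ℂ f (ball 0 R))
    (hsum : ∀ w ∈ ball (0:ℂ) R, HasSum (fun n : ℕ => c n * w ^ n) (f w))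
    (hM : IsLUB ((fun w => ‖f w‖) '' ball (0:ℂ) R) M)
    (z : ℂ) (hz : ‖z‖ = r) :
    (∑' k : ℕ, ‖c (m + k) * z ^ (m + k)‖ ^ q) ^ (1 / q) ≤
      2 * r ^ m / (R ^ (m - 1) * (R ^ q - r ^ q) ^ (1 / q)) * (M - ‖c 0‖) := by
  have hcont := hf.continuousOn
  have hfM : ∀ w ∈ ball (0:ℂ) R, ‖f w‖ ≤ M := fun w hw => hM.1 ⟨w, hw, rfl⟩
  have hc0M : ‖c 0‖ ≤ M := by
    have h0 : (0:ℂ) ∈ ball (0:ℂ) R := by simp [hR]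
    have hs0 : HasSum (fun k : ℕ => c k * (0:ℂ)^k) (c 0) := by
      have h := hasSum_single (f := fun k : ℕ => c k * (0:ℂ)^k) 0
        (fun b hb => by simp [zero_pow hb])
      simpa using h
    have hf0 : f 0 = c 0 := (hsum 0 h0).unique hs0
    calc ‖c 0‖ = ‖f 0‖ := by rw [hf0]
    _ ≤ M := hfM 0 h0
  have hE0 : (0:ℝ) ≤ 2*(M - ‖c 0‖) := by linarith
  have hx0 : (0:ℝ) ≤ r/R := by positivity
  have hx1 : r/R < 1 := (div_lt_one hR).2 h3
  have hy0 : (0:ℝ) ≤ (r/R)^q := Real.rpow_nonneg hx0 q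
  have hy1 : (r/R)^q < 1 := Real.rpow_lt_one hx0 hx1 hq
  -- termwise bound
  have hterm : ∀ k : ℕ, ‖c (m + k) * z ^ (m + k)‖ ^ q ≤
      (2*(M - ‖c 0‖))^q * (((r/R)^q)^m * ((r/R)^q)^k) := by
    intro k
    have hj : 1 ≤ m + k := le_trans hm (Nat.le_add_right m k)
    have h1 := auxCoeffLim R M f c hR hcont hsum hfM (m+k) hj
    have h2 : ‖c (m + k)‖ * r^(m+k) ≤ (2*(M - ‖c 0‖)) * (r/R)^(m+k) := by
      have hkey : ‖c (m+k)‖ * r^(m+k) = (‖c (m+k)‖ * R^(m+k)) * (r/R)^(m+k) := by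
        rw [div_pow, mul_assoc, mul_comm (R^(m+k)) (r^(m+k)/R^(m+k)),
          div_mul_cancel₀ _ (pow_ne_zero (m+k) hR.ne')]
      rw [hkey]
      exact mul_le_mul_of_nonneg_right h1 (by positivity)
    have h3' : ‖c (m + k) * z ^ (m + k)‖ = ‖c (m+k)‖ * r^(m+k) := by
      rw [norm_mul, norm_pow, hz]
    rw [h3']
    calc (‖c (m+k)‖ * r^(m+k)) ^ q ≤ ((2*(M - ‖c 0‖)) * (r/R)^(m+k)) ^ q :=
      Real.rpow_le_rpow (by positivity) h2 hq.le
    _ = (2*(M - ‖c 0‖))^q * (((r/R)^(m+k) : ℝ)) ^ q := Real.mul_rpow hE0 (by positivity)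
    _ = (2*(M - ‖c 0‖))^q * (((r/R)^q)^m * ((r/R)^q)^k) := by
        congr 1
        rw [← pow_add, ← Real.rpow_natCast ((r/R)^q) (m+k), ← Real.rpow_natCast (r/R) (m+k)]
        simp only [← Real.rpow_mul hx0]
        ring_nf
  have hgeo : Summable (fun k : ℕ => (2*(M - ‖c 0‖))^q * (((r/R)^q)^m * ((r/R)^q)^k)) := by
    apply Summable.mul_left
    apply Summable.mul_left
    exact summable_geometric_of_lt_one hy0 hy1
  have hsum1 : Summable (fun k : ℕ => ‖c (m + k) * z ^ (m + k)‖ ^ q) :=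
    Summable.of_nonneg_of_le (fun k => Real.rpow_nonneg (norm_nonneg _) q) hterm hgeo
  have hts : (∑' k : ℕ, ‖c (m + k) * z ^ (m + k)‖ ^ q) ≤
      (2*(M - ‖c 0‖))^q * ((r/R)^q)^m * (1 - (r/R)^q)⁻¹ := by
    have h4 := Summable.tsum_le_tsum hterm hsum1 hgeo
    refine h4.trans_eq ?_
    have h5 : (fun k : ℕ => (2*(M - ‖c 0‖))^q * (((r/R)^q)^m * ((r/R)^q)^k)) =
        fun k : ℕ => ((2*(M - ‖c 0‖))^q * ((r/R)^q)^m) * ((r/R)^q)^k :=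
      funext fun k => by ring
    rw [h5, tsum_mul_left, tsum_geometric_of_lt_one hy0 hy1, mul_assoc]
  -- pass to 1/q power
  have hmain : (∑' k : ℕ, ‖c (m + k) * z ^ (m + k)‖ ^ q) ^ (1/q) ≤
      ((2*(M - ‖c 0‖))^q * ((r/R)^q)^m * (1 - (r/R)^q)⁻¹) ^ (1/q) :=
    Real.rpow_le_rpow (tsum_nonneg (fun k => Real.rpow_nonneg (norm_nonneg _) q)) hts
      (by positivity)
  refine hmain.trans_eq ?_
  -- now compute the right-hand side
  have hRq : (0:ℝ) < R^q := Real.rpow_pos_of_pos hR q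
  have hrq : r^q < R^q := Real.rpow_lt_rpow hr h3 hq
  have hsub : (0:ℝ) < R^q - r^q := sub_pos.2 hrq
  have hD : (0:ℝ) < (R^q - r^q)^(1/q) := Real.rpow_pos_of_pos hsub _
  have h1y : 1 - (r/R)^q = (R^q - r^q)/R^q := by
    rw [Real.div_rpow hr hR.le]
    field_simp
  have hym : (((r/R)^q)^m : ℝ) = ((r/R)^m)^q := by
    rw [← Real.rpow_natCast ((r/R)^q) m, ← Real.rpow_mul hx0,
      ← Real.rpow_natCast (r/R) m, ← Real.rpow_mul hx0]
    ring_nf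
  rw [hym, h1y]
  rw [Real.mul_rpow (by positivity) (by positivity),
    Real.mul_rpow (by positivity) (by positivity),
    Real.inv_rpow (by positivity), Real.div_rpow hsub.le hRq.le]
  rw [one_div, Real.rpow_rpow_inv hE0 hq.ne', Real.rpow_rpow_inv (by positivity) hq.ne',
    Real.rpow_rpow_inv hR.le hq.ne']
  have hRm : R^(m-1) * R = R^m := by
    rw [← pow_succ, Nat.sub_add_cancel hm]
  rw [div_pow, inv_div]
  field_simp
  rw [← hRm]
  ring
end
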